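/- arXiv:1106.4771 — 5 statements merged into one kernel-verified Lean document; each statement's English description precedes it below -/
import Mathlib

section
/- Let u satisfy the FKPP hypotheses. Then there exists a constant C₅ > 0 such that for all t ≥ 1 and all y ∈ [0, √t], u(t, √2·t − (3/(2√2))·log t + y) ≥ 1 − C₅·(y+2)⁴·e^{−√2·y}. (Upper bound on the probability that some particle of branching Brownian motion exceeds √2·t − (3/(2√2))·log t + y at time t.) -/
open Real MeasureTheory Filter Set

/-- The FKPP hypotheses for a function `u : (0,∞) × ℝ → ℝ` (defined on all of `ℝ × ℝ`,
with the conditions imposed only for positive times):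
`0 ≤ u ≤ 1`; `u` is continuous, `C¹` in time and `C²` in space on `(0,∞) × ℝ`;
`u` satisfies the FKPP equation `∂u/∂t = (1/2)·∂²u/∂x² + u² − u` there;
`u(t,x) → 1` as `t → 0⁺` for `x > 0` and `u(t,x) → 0` as `t → 0⁺` for `x < 0`;
and `x ↦ u(t,x)` is nondecreasing for each `t > 0`. -/
structure IsFKPPSolution (u : ℝ → ℝ → ℝ) : Prop where
  nonneg : ∀ t > (0:ℝ), ∀ x : ℝ, 0 ≤ u t x
  le_one : ∀ t > (0:ℝ), ∀ x : ℝ, u t x ≤ 1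
  cont : ContinuousOn (fun p : ℝ × ℝ => u p.1 p.2) {p : ℝ × ℝ | 0 < p.1}
  diff_t : ∀ t > (0:ℝ), ∀ x : ℝ, DifferentiableAt ℝ (fun s => u s x) t
  diff_x : ∀ t > (0:ℝ), ∀ x : ℝ, DifferentiableAt ℝ (fun y => u t y) x
  diff_xx : ∀ t > (0:ℝ), ∀ x : ℝ, DifferentiableAt ℝ (deriv (fun y => u t y)) x
  cont_deriv_t : ContinuousOn (fun p : ℝ × ℝ => deriv (fun s => u s p.2) p.1)
    {p : ℝ × ℝ | 0 < p.1}
  cont_deriv_x : ContinuousOn (fun p : ℝ × ℝ => deriv (fun y => u p.1 y) p.2)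
    {p : ℝ × ℝ | 0 < p.1}
  cont_deriv_xx : ContinuousOn (fun p : ℝ × ℝ => deriv (deriv (fun y => u p.1 y)) p.2)
    {p : ℝ × ℝ | 0 < p.1}
  pde : ∀ t > (0:ℝ), ∀ x : ℝ,
    deriv (fun s => u s x) t
      = (1/2) * deriv (deriv (fun y => u t y)) x + (u t x)^2 - u t x
  init_pos : ∀ x > (0:ℝ), Tendsto (fun t => u t x) (nhdsWithin 0 (Ioi 0)) (nhds 1)
  init_neg : ∀ x < (0:ℝ), Tendsto (fun t => u t x) (nhdsWithin 0 (Ioi 0)) (nhds 0)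
  mono : ∀ t > (0:ℝ), Monotone (fun x => u t x)


/-- If `g` attains its max over `[a,b]` at the right endpoint `b` (with `a < b`)
and is differentiable at `b`, then `g' b ≥ 0`. -/
lemma deriv_nonneg_of_isMaxOn_right {g : ℝ → ℝ} {a b g' : ℝ} (hab : a < b)
    (hd : HasDerivAt g g' b) (hmax : ∀ s ∈ Icc a b, g s ≤ g b) : 0 ≤ g' := by
  by_contra hneg
  push_neg at hneg
  have hslope := hasDerivAt_iff_tendsto_slope.1 hd
  have h1 : Tendsto (slope g b) (nhdsWithin b (Iio b)) (nhds g') :=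
    hslope.mono_left (nhdsWithin_mono _ (fun y hy => by simp [Set.mem_Iio] at hy; simp [ne_of_lt hy]))
  have h2 : ∀ᶠ s in nhdsWithin b (Iio b), slope g b s < 0 :=
    h1.eventually_lt_const hneg
  have h3 : ∀ᶠ s in nhdsWithin b (Iio b), a < s :=
    eventually_nhdsWithin_of_eventually_nhds (eventually_gt_nhds hab)
  have h4 : ∃ s, (slope g b s < 0 ∧ a < s) ∧ s < b := by
    have := (h2.and h3).and (eventually_mem_nhdsWithin (s := Iio b))
    rcases this.exists with ⟨s, hs⟩
    exact ⟨s, ⟨hs.1.1, hs.1.2⟩, hs.2⟩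
  rcases h4 with ⟨s, ⟨hs0, has⟩, hsb⟩
  have hgs : g s ≤ g b := hmax s ⟨le_of_lt has, le_of_lt hsb⟩
  rw [slope_def_field] at hs0
  have hden : s - b < 0 := by linarith
  rcases (div_neg_iff).1 hs0 with ⟨h, h'⟩ | ⟨h, h'⟩
  · linarith
  · linarith

/-- Second derivative test at an interior local max: if `f` has a local max at `x₀`,
`f'` exists near `x₀` (given by `f1`), and `f1` is differentiable at `x₀` with value `f2`,
then `f1 x₀ = 0` and `f2 ≤ 0`. -/
lemma second_deriv_test {f f1 : ℝ → ℝ} {x₀ f2 : ℝ}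
    (hmax : IsLocalMax f x₀)
    (hd1 : ∀ᶠ ξ in nhds x₀, HasDerivAt f (f1 ξ) ξ)
    (hd2 : HasDerivAt f1 f2 x₀) : f1 x₀ = 0 ∧ f2 ≤ 0 := by
  have hf10 : f1 x₀ = 0 := hmax.hasDerivAt_eq_zero hd1.self_of_nhds
  refine ⟨hf10, ?_⟩
  by_contra hpos
  push_neg at hpos
  -- f1 is positive just to the right of x₀
  have hslope := hasDerivAt_iff_tendsto_slope.1 hd2
  have h1 : Tendsto (slope f1 x₀) (nhdsWithin x₀ (Ioi x₀)) (nhds f2) :=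
    hslope.mono_left (nhdsWithin_mono _ (fun y hy => by simp [Set.mem_Ioi] at hy; simp [ne_of_gt hy]))
  have h2 : ∀ᶠ s in nhdsWithin x₀ (Ioi x₀), 0 < slope f1 x₀ s :=
    h1.eventually_const_lt hpos
  have h3 : ∀ᶠ s in nhdsWithin x₀ (Ioi x₀), 0 < f1 s := by
    filter_upwards [h2, eventually_mem_nhdsWithin (s := Ioi x₀)] with s hs hmem
    rw [slope_def_field, hf10] at hs
    have hden : 0 < s - x₀ := by simp [Set.mem_Ioi] at hmem; linarith
    rcases (div_pos_iff).1 hs with ⟨h, _⟩ | ⟨_, h⟩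
    · linarith
    · linarith
  -- extract δ-interval where f1 > 0, f diff, and f ≤ f x₀
  rcases eventually_nhdsWithin_iff.1 h3 with h3'
  rcases Metric.eventually_nhds_iff.1 (h3'.and (hd1.and hmax)) with ⟨δ, hδ, hball⟩
  set c := x₀ + δ/2 with hc
  have hball' : ∀ ξ ∈ Icc x₀ c, HasDerivAt f (f1 ξ) ξ ∧ f ξ ≤ f x₀ ∧ (x₀ < ξ → 0 < f1 ξ) := by
    intro ξ hξ
    have : dist ξ x₀ < δ := by
      rw [Real.dist_eq, abs_lt]
      rcases hξ with ⟨h1', h2'⟩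
      constructor <;> [linarith; (rw [hc] at h2'; linarith)]
    have hb := hball this
    exact ⟨hb.2.1, hb.2.2, fun hlt => hb.1 hlt⟩
  have hmono : StrictMonoOn f (Icc x₀ c) := by
    apply strictMonoOn_of_deriv_pos (convex_Icc _ _)
    · intro ξ hξ
      exact ((hball' ξ hξ).1).continuousAt.continuousWithinAt
    · intro ξ hξ
      rw [interior_Icc] at hξ
      have h := hball' ξ ⟨le_of_lt hξ.1, le_of_lt hξ.2⟩
      rw [h.1.deriv]
      exact h.2.2 hξ.1
  have hcpos : x₀ < c := by rw [hc]; linarith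
  have := hmono (left_mem_Icc.2 (le_of_lt hcpos)) (right_mem_Icc.2 (le_of_lt hcpos)) hcpos
  have hle := (hball' c (right_mem_Icc.2 (le_of_lt hcpos))).2.1
  linarith

set_option maxHeartbeats 2000000 in
/-- Parabolic comparison principle on a domain with moving left boundary. -/
lemma comp_principle (u : ℝ → ℝ → ℝ) (hu : IsFKPPSolution u)
    (a b : ℝ) (ha : 0 < a) (hab : a ≤ b)
    (γ : ℝ → ℝ) (hγc : Continuous γ) (hγm : MonotoneOn γ (Set.Icc a b))
    (Φ : ℝ → ℝ → ℝ)
    (hΦc : ContinuousOn (fun p : ℝ × ℝ => Φ p.1 p.2) {p : ℝ × ℝ | 0 < p.1})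
    (hΦ0 : ∀ t x, a ≤ t → t ≤ b → γ t ≤ x → 0 ≤ Φ t x)
    (hinit : ∀ x, γ a ≤ x → 1 - u a x ≤ Φ a x)
    (hbdry : ∀ t, a ≤ t → t ≤ b → 1 - u t (γ t) ≤ Φ t (γ t))
    (hbranch : ∀ t x, a < t → t ≤ b → γ t < x → Φ t x < 1 - u t x →
      ∃ (φ : ℝ → ℝ → ℝ) (φt : ℝ) (φx : ℝ → ℝ) (φxx : ℝ),
        (∀ t' x', a ≤ t' → t' ≤ b → γ t' ≤ x' → Φ t' x' ≤ φ t' x') ∧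
        φ t x = Φ t x ∧
        HasDerivAt (fun τ => φ τ x) φt t ∧
        (∀ᶠ ξ in nhds x, HasDerivAt (fun ξ' => φ t ξ') (φx ξ) ξ) ∧
        HasDerivAt φx φxx x ∧
        (1/2) * φxx + φ t x - (φ t x)^2 ≤ φt) :
    ∀ t x, a ≤ t → t ≤ b → γ t ≤ x → 1 - u t x ≤ Φ t x := by
  intro t₁ x₁ hat1 ht1b hγx1
  by_contra hcon
  push_neg at hcon
  set d : ℝ := (1 - u t₁ x₁) - Φ t₁ x₁ with hd
  have hdpos : 0 < d := by simp [hd]; linarith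
  set μ : ℝ := Real.exp (-2*(b-a)) * d / 2 with hμ
  have hμpos : 0 < μ := by positivity
  set R : ℝ := Real.sqrt (2/μ) with hR
  have hRnn : 0 ≤ R := Real.sqrt_nonneg _
  have hR2 : μ * R^2 = 2 := by
    rw [hR, sq_sqrt (by positivity : (0:ℝ) ≤ 2/μ)]
    field_simp
  set V : ℝ × ℝ → ℝ := fun p =>
    Real.exp (-2*(p.1 - a)) * ((1 - u p.1 p.2) - Φ p.1 p.2) - μ*(1 + (p.2 - x₁)^2) with hV
  set K : Set (ℝ × ℝ) :=
    (Icc a b ×ˢ Icc (x₁ - R) (x₁ + R)) ∩ {p : ℝ × ℝ | γ p.1 ≤ p.2} with hK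
  have hKsub : K ⊆ {p : ℝ × ℝ | 0 < p.1} := by
    rintro ⟨s, y⟩ ⟨⟨hs, _⟩, _⟩
    exact lt_of_lt_of_le ha hs.1
  have hKcompact : IsCompact K :=
    (isCompact_Icc.prod isCompact_Icc).inter_right
      (isClosed_le (hγc.comp continuous_fst) continuous_snd)
  have hKne : (t₁, x₁) ∈ K := by
    refine ⟨⟨⟨hat1, ht1b⟩, ⟨by linarith, by linarith⟩⟩, hγx1⟩
  have hVcont : ContinuousOn V K := by
    apply ContinuousOn.sub
    · apply ContinuousOn.mul
      · exact (Real.continuous_exp.comp (by fun_prop)).continuousOn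
      · exact ((continuousOn_const.sub (hu.cont.mono hKsub)).sub (hΦc.mono hKsub))
    · fun_prop
  obtain ⟨p, hpK, hpmax⟩ := hKcompact.exists_isMaxOn ⟨(t₁,x₁), hKne⟩ hVcont
  obtain ⟨ts, xs⟩ := p
  have hVlow : μ ≤ V (t₁, x₁) := by
    have h1 : Real.exp (-2*(b-a)) ≤ Real.exp (-2*(t₁-a)) := by
      apply Real.exp_le_exp.2; nlinarith
    have h2 : Real.exp (-2*(t₁-a)) * d ≥ Real.exp (-2*(b-a)) * d :=
      mul_le_mul_of_nonneg_right h1 (le_of_lt hdpos)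
    simp only [hV]
    have : ((1:ℝ) + (x₁ - x₁)^2) = 1 := by ring
    rw [this]
    have : (1 - u t₁ x₁) - Φ t₁ x₁ = d := rfl
    rw [this]
    nlinarith [h2]
  have hVp : μ ≤ V (ts, xs) := le_trans hVlow (hpmax hKne)
  -- Basic bounds at p
  have htsab : ts ∈ Icc a b := hpK.1.1
  have htspos : 0 < ts := lt_of_lt_of_le ha htsab.1
  have hxsIcc : xs ∈ Icc (x₁ - R) (x₁ + R) := hpK.1.2
  have hγxs : γ ts ≤ xs := hpK.2
  have hwle : ∀ s y, 0 < s → (1 - u s y) ≤ 1 := by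
    intro s y hs; have := hu.nonneg s hs y; linarith
  have hEle1 : ∀ s, a ≤ s → Real.exp (-2*(s-a)) ≤ 1 := by
    intro s hs; rw [show (1:ℝ) = Real.exp 0 by simp]
    apply Real.exp_le_exp.2; linarith
  have hVupper : ∀ s y, (s,y) ∈ K → V (s,y) ≤ 1 - μ*(1 + (y - x₁)^2) := by
    rintro s y hsy
    have hs0 : 0 < s := hKsub hsy
    have hsa : a ≤ s := hsy.1.1.1
    have hΦ0' : 0 ≤ Φ s y := hΦ0 s y hsy.1.1.1 hsy.1.1.2 hsy.2
    have hW1 : (1 - u s y) - Φ s y ≤ 1 := by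
      have := hwle s y hs0; linarith
    have hE := hEle1 s hsa
    have hEpos : 0 < Real.exp (-2*(s-a)) := Real.exp_pos _
    simp only [hV]
    rcases le_or_gt ((1 - u s y) - Φ s y) 0 with hneg | hpos
    · nlinarith
    · nlinarith
  -- W > 0 at p
  have hWpos : 0 < (1 - u ts xs) - Φ ts xs := by
    by_contra hnp
    push_neg at hnp
    have : V (ts, xs) ≤ 0 - μ*(1 + (xs - x₁)^2) := by
      simp only [hV]
      have hEpos : 0 < Real.exp (-2*(ts-a)) := Real.exp_pos _
      nlinarith
    nlinarith [sq_nonneg (xs - x₁)]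
  -- t* > a
  have htsa : a < ts := by
    rcases eq_or_lt_of_le htsab.1 with heq | hlt
    · exfalso
      have h := hinit xs (by rw [heq]; exact hγxs)
      rw [heq] at h
      linarith
    · exact hlt
  -- x* > γ t*
  have hγlt : γ ts < xs := by
    rcases eq_or_lt_of_le hγxs with heq | hlt
    · exfalso
      have := hbdry ts htsab.1 htsab.2
      rw [heq] at this
      linarith
    · exact hlt
  -- |x* - x₁| < R
  have hxsR : (xs - x₁)^2 < R^2 := by
    by_contra hge
    push_neg at hge
    have h1 := hVupper ts xs hpK
    have hmul : μ * R^2 ≤ μ * (xs - x₁)^2 := mul_le_mul_of_nonneg_left hge (le_of_lt hμpos)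
    have hexpand : μ*(1 + (xs - x₁)^2) = μ + μ*(xs - x₁)^2 := by ring
    linarith
  have hxs_lt : x₁ - R < xs ∧ xs < x₁ + R := by
    have habs : |xs - x₁| < R := by
      have h := Real.sqrt_lt_sqrt (sq_nonneg (xs - x₁)) hxsR
      rwa [Real.sqrt_sq_eq_abs, Real.sqrt_sq hRnn] at h
    have h2 := abs_lt.1 habs
    exact ⟨by linarith [h2.1], by linarith [h2.2]⟩
  -- obtain the branch
  obtain ⟨φ, φt, φx, φxx, hφge, hφeq, hφdt, hφdx, hφdxx, hφineq⟩ :=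
    hbranch ts xs htsa htsab.2 hγlt (by linarith)
  set E : ℝ := Real.exp (-2*(ts - a)) with hE
  have hEpos : 0 < E := Real.exp_pos _
  -- G ≤ V on K with equality at p
  set G : ℝ × ℝ → ℝ := fun q =>
    Real.exp (-2*(q.1 - a)) * ((1 - u q.1 q.2) - φ q.1 q.2) - μ*(1 + (q.2 - x₁)^2) with hG
  have hGle : ∀ q ∈ K, G q ≤ V q := by
    rintro ⟨s, y⟩ hq
    have hφ := hφge s y hq.1.1.1 hq.1.1.2 hq.2
    simp only [hG, hV]
    have hEp : 0 < Real.exp (-2*(s-a)) := Real.exp_pos _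
    have hmm := mul_le_mul_of_nonneg_left
      (show (1 - u s y) - φ s y ≤ (1 - u s y) - Φ s y by linarith) (le_of_lt hEp)
    linarith
  have hGp : G (ts, xs) = V (ts, xs) := by
    simp only [hG, hV, hφeq]
  -- x-direction: local max of F at xs
  set F : ℝ → ℝ := fun ξ =>
    Real.exp (-2*(ts - a)) * ((1 - u ts ξ) - φ ts ξ) - μ*(1 + (ξ - x₁)^2) with hF
  have hFmax : IsLocalMax F xs := by
    have hO : Ioo (max (γ ts) (x₁ - R)) (x₁ + R) ∈ nhds xs := by
      apply Ioo_mem_nhds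
      · exact max_lt hγlt hxs_lt.1
      · exact hxs_lt.2
    filter_upwards [hO] with ξ hξ
    have hξK : (ts, ξ) ∈ K := by
      refine ⟨⟨htsab, ⟨?_, le_of_lt hξ.2⟩⟩, ?_⟩
      · exact le_of_lt (lt_of_le_of_lt (le_max_right _ _) hξ.1)
      · exact le_of_lt (lt_of_le_of_lt (le_max_left _ _) hξ.1)
    calc F ξ = G (ts, ξ) := rfl
    _ ≤ V (ts, ξ) := hGle _ hξK
    _ ≤ V (ts, xs) := hpmax hξK
    _ = G (ts, xs) := hGp.symm
    _ = F xs := rfl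
  set F1 : ℝ → ℝ := fun ξ =>
    E * ((- deriv (fun y => u ts y) ξ) - φx ξ) - μ*(2*(ξ - x₁)) with hF1
  have hF1d : ∀ᶠ ξ in nhds xs, HasDerivAt F (F1 ξ) ξ := by
    filter_upwards [hφdx] with ξ hφξ
    have hud : HasDerivAt (fun y => u ts y) (deriv (fun y => u ts y) ξ) ξ :=
      (hu.diff_x ts htspos ξ).hasDerivAt
    have h1 : HasDerivAt (fun y => (1 - u ts y) - φ ts y)
        ((- deriv (fun y => u ts y) ξ) - φx ξ) ξ := by
      have := ((hasDerivAt_const ξ (1:ℝ)).sub hud).sub hφξ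
      exact this.congr_deriv (by ring)
    have h2 : HasDerivAt (fun ξ' => μ*(1 + (ξ' - x₁)^2)) (μ*(2*(ξ - x₁))) ξ := by
      have : HasDerivAt (fun ξ' : ℝ => 1 + (ξ' - x₁)^2) (2*(ξ - x₁)) ξ := by
        have hb : HasDerivAt (fun ξ' : ℝ => ξ' - x₁) 1 ξ :=
          (hasDerivAt_id ξ).sub_const x₁
        have := hb.pow 2
        exact ((hasDerivAt_const ξ (1:ℝ)).add this).congr_deriv (by norm_num)
      simpa using this.const_mul μ
    exact (h1.const_mul E).sub h2
  have hF2d : HasDerivAt F1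
      (E * ((- deriv (deriv (fun y => u ts y)) xs) - φxx) - μ*2) xs := by
    have hud : HasDerivAt (deriv (fun y => u ts y)) (deriv (deriv (fun y => u ts y)) xs) xs :=
      (hu.diff_xx ts htspos xs).hasDerivAt
    have h1 : HasDerivAt (fun ξ => (- deriv (fun y => u ts y) ξ) - φx ξ)
        ((- deriv (deriv (fun y => u ts y)) xs) - φxx) xs := hud.neg.sub hφdxx
    have h2 : HasDerivAt (fun ξ : ℝ => μ*(2*(ξ - x₁))) (μ*2) xs := by
      have : HasDerivAt (fun ξ : ℝ => 2*(ξ - x₁)) 2 xs := by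
        simpa using ((hasDerivAt_id xs).sub_const x₁).const_mul (2:ℝ)
      simpa using this.const_mul μ
    exact (h1.const_mul E).sub h2
  obtain ⟨-, hxxtest⟩ := second_deriv_test hFmax hF1d hF2d
  -- t-direction
  set g : ℝ → ℝ := fun τ =>
    Real.exp (-2*(τ - a)) * ((1 - u τ xs) - φ τ xs) - μ*(1 + (xs - x₁)^2) with hg
  have hgmax : ∀ s ∈ Icc a ts, g s ≤ g ts := by
    intro s hs
    have hsK : (s, xs) ∈ K := by
      refine ⟨⟨⟨hs.1, le_trans hs.2 htsab.2⟩, hxsIcc⟩, ?_⟩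
      have hmono : γ s ≤ γ ts := hγm ⟨hs.1, le_trans hs.2 htsab.2⟩ htsab hs.2
      show γ s ≤ xs
      linarith
    calc g s = G (s, xs) := rfl
    _ ≤ V (s, xs) := hGle _ hsK
    _ ≤ V (ts, xs) := hpmax hsK
    _ = G (ts, xs) := hGp.symm
    _ = g ts := rfl
  have hgd : HasDerivAt g
      ((-2*E) * (1 - u ts xs - φ ts xs) + E * (- deriv (fun s => u s xs) ts - φt)) ts := by
    have hlin : HasDerivAt (fun τ : ℝ => -2*(τ - a)) (-2) ts := by
      simpa using ((hasDerivAt_id ts).sub_const a).const_mul (-2:ℝ)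
    have hexp : HasDerivAt (fun τ : ℝ => Real.exp (-2*(τ - a)))
        (Real.exp (-2*(ts - a)) * (-2)) ts := hlin.exp
    have hud : HasDerivAt (fun s => u s xs) (deriv (fun s => u s xs) ts) ts :=
      (hu.diff_t ts htspos xs).hasDerivAt
    have h1 : HasDerivAt (fun τ => (1 - u τ xs) - φ τ xs)
        ((- deriv (fun s => u s xs) ts) - φt) ts := by
      have := ((hasDerivAt_const ts (1:ℝ)).sub hud).sub hφdt
      exact this.congr_deriv (by ring)
    have h2 := (hexp.mul h1).sub_const (μ*(1 + (xs - x₁)^2))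
    refine h2.congr_deriv ?_
    rw [hE]
    ring
  have httest := deriv_nonneg_of_isMaxOn_right htsa hgd hgmax
  have hval : V (ts, xs) = E * (1 - u ts xs - Φ ts xs) - μ*(1 + (xs - x₁)^2) := rfl
  clear_value d μ R V K E G F F1 g
  -- final algebra
  have hpde : deriv (fun s => u s xs) ts
      = (1/2) * deriv (deriv (fun y => u ts y)) xs + (u ts xs)^2 - u ts xs :=
    hu.pde ts htspos xs
  have hφv0 : 0 ≤ φ ts xs := by rw [hφeq]; exact hΦ0 ts xs htsab.1 htsab.2 hγxs
  have hWpos' : 0 < 1 - u ts xs - φ ts xs := by rw [hφeq]; linarith [hWpos]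
  have huv0 : 0 ≤ u ts xs := hu.nonneg ts htspos xs
  have huv1 : u ts xs ≤ 1 := hu.le_one ts htspos xs
  -- t-test: divide by E
  have h' : 0 ≤ E * (-2*(1 - u ts xs - φ ts xs) + (- deriv (fun s => u s xs) ts - φt)) := by
    have heq : (-2*E) * (1 - u ts xs - φ ts xs) + E * (- deriv (fun s => u s xs) ts - φt)
        = E * (-2*(1 - u ts xs - φ ts xs) + (- deriv (fun s => u s xs) ts - φt)) := by ring
    linarith [httest, heq.symm.le, heq.le]
  have ht2 : 0 ≤ -2*(1 - u ts xs - φ ts xs) + (- deriv (fun s => u s xs) ts - φt) :=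
    (mul_nonneg_iff_of_pos_left hEpos).1 h'
  -- x-test
  have hx2 : E * (-(deriv (deriv (fun y => u ts y)) xs) - φxx) ≤ 2*μ := by linarith [hxxtest]
  -- middle inequality
  have hmid : (- deriv (fun s => u s xs) ts - φt)
      ≤ (1/2)*(-(deriv (deriv (fun y => u ts y)) xs) - φxx)
        + ((u ts xs - (u ts xs)^2) - (φ ts xs - (φ ts xs)^2)) := by
    have h1 : - deriv (fun s => u s xs) ts
        = -(1/2) * deriv (deriv (fun y => u ts y)) xs - (u ts xs)^2 + u ts xs := by
      rw [hpde]; ring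
    linarith [hφineq, h1.le, h1.symm.le]
  have hnl : (u ts xs - (u ts xs)^2) - (φ ts xs - (φ ts xs)^2)
      ≤ 1 - u ts xs - φ ts xs := by
    nlinarith [mul_nonneg (le_of_lt hWpos')
      (show (0:ℝ) ≤ 1 - u ts xs + φ ts xs by linarith)]
  have hstep : 2*(1 - u ts xs - φ ts xs)
      ≤ (1/2)*(-(deriv (deriv (fun y => u ts y)) xs) - φxx) + (1 - u ts xs - φ ts xs) := by
    linarith [ht2, hmid, hnl]
  have hcomb := mul_le_mul_of_nonneg_left hstep (le_of_lt hEpos)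
  have hhalf : E*((1/2)*(-(deriv (deriv (fun y => u ts y)) xs) - φxx)
      + (1 - u ts xs - φ ts xs))
      ≤ μ + E*(1 - u ts xs - φ ts xs) := by
    have heq2 : E*((1/2)*(-(deriv (deriv (fun y => u ts y)) xs) - φxx)
        + (1 - u ts xs - φ ts xs))
        = (1/2)*(E*(-(deriv (deriv (fun y => u ts y)) xs) - φxx))
          + E*(1 - u ts xs - φ ts xs) := by ring
    linarith [hx2, heq2.le, heq2.symm.le]
  have hEW : 2*μ ≤ E * (1 - u ts xs - φ ts xs) := by
    have hq : 0 ≤ μ * (xs - x₁)^2 := mul_nonneg (le_of_lt hμpos) (sq_nonneg _)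
    have hexpand2 : μ*(1 + (xs - x₁)^2) = μ + μ*(xs - x₁)^2 := by ring
    rw [hφeq]
    linarith [hVp, hval.le, hval.symm.le]
  have hfin : E * (1 - u ts xs - φ ts xs) ≤ μ := by
    have heq3 : E * (2*(1 - u ts xs - φ ts xs)) = 2*(E*(1 - u ts xs - φ ts xs)) := by ring
    linarith [hcomb, hhalf, heq3.le, heq3.symm.le]
  linarith [hEW, hfin, hμpos]

lemma crude_bound (u : ℝ → ℝ → ℝ) (hu : IsFKPPSolution u)
    (t₀ xt ε lam : ℝ) (ht₀ : 0 < t₀) (ht₀1 : t₀ ≤ 16) (hxt : 0 < xt)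
    (hε0 : 0 ≤ ε) (hε : 1 - u t₀ xt ≤ ε) (hlam : 0 ≤ lam) :
    ∀ x : ℝ, 1 - u 16 x
      ≤ ε * Real.exp (16 - t₀) + Real.exp (-lam*(x - xt) + (lam^2/2+1)*(16 - t₀)) := by
  set Φ : ℝ → ℝ → ℝ := fun t x =>
    ε * Real.exp (t - t₀) + Real.exp (-lam*(x - xt) + (lam^2/2+1)*(t - t₀)) with hΦ
  have key : ∀ t x, t₀ ≤ t → t ≤ 16 → xt ≤ x → 1 - u t x ≤ Φ t x := by
    apply comp_principle u hu t₀ 16 ht₀ ht₀1 (fun _ => xt) continuous_const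
      (monotoneOn_const.mono (subset_refl _))
    · -- continuity
      apply ContinuousOn.add
      · exact (continuous_const.mul (Real.continuous_exp.comp (by fun_prop))).continuousOn
      · exact (Real.continuous_exp.comp (by fun_prop)).continuousOn
    · intro t x _ _ _
      positivity
    · -- initial
      intro x hx
      have hmono := hu.mono t₀ ht₀ hx
      have : 1 - u t₀ x ≤ ε := by simpa using le_trans (by linarith [hmono] : 1 - u t₀ x ≤ 1 - u t₀ xt) hε
      have h1 : ε * Real.exp (t₀ - t₀) = ε := by simp
      have h2 : 0 < Real.exp (-lam*(x - xt) + (lam^2/2+1)*(t₀ - t₀)) := Real.exp_pos _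
      simp only [hΦ]
      linarith
    · -- boundary
      intro t hta htb
      have h1 : 0 ≤ ε * Real.exp (t - t₀) := by positivity
      have h2 : (1:ℝ) ≤ Real.exp (-lam*(xt - xt) + (lam^2/2+1)*(t - t₀)) := by
        apply Real.one_le_exp
        nlinarith [sq_nonneg lam]
      have h3 := hu.nonneg t (lt_of_lt_of_le ht₀ hta) xt
      simp only [hΦ]
      linarith
    · -- branch
      intro t x hta htb hxt' hbad
      refine ⟨Φ, ε * Real.exp (t - t₀) + (lam^2/2+1) * Real.exp (-lam*(x - xt) + (lam^2/2+1)*(t - t₀)),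
        fun ξ => -lam * Real.exp (-lam*(ξ - xt) + (lam^2/2+1)*(t - t₀)),
        lam^2 * Real.exp (-lam*(x - xt) + (lam^2/2+1)*(t - t₀)), ?_, rfl, ?_, ?_, ?_, ?_⟩
      · intro t' x' _ _ _; exact le_refl _
      · -- t derivative
        have h1 : HasDerivAt (fun τ : ℝ => ε * Real.exp (τ - t₀)) (ε * Real.exp (t - t₀)) t := by
          have := ((hasDerivAt_id t).sub_const t₀).exp
          simpa using this.const_mul ε
        have h2 : HasDerivAt (fun τ : ℝ => Real.exp (-lam*(x - xt) + (lam^2/2+1)*(τ - t₀)))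
            ((lam^2/2+1) * Real.exp (-lam*(x - xt) + (lam^2/2+1)*(t - t₀))) t := by
          have hl : HasDerivAt (fun τ : ℝ => -lam*(x - xt) + (lam^2/2+1)*(τ - t₀)) (lam^2/2+1) t := by
            simpa using (((hasDerivAt_id t).sub_const t₀).const_mul (lam^2/2+1)).const_add (-lam*(x - xt))
          simpa [mul_comm] using hl.exp
        exact h1.add h2
      · -- x derivative (eventually)
        filter_upwards with ξ
        have h1 : HasDerivAt (fun ξ' : ℝ => ε * Real.exp (t - t₀)) 0 ξ := hasDerivAt_const _ _
        have h2 : HasDerivAt (fun ξ' : ℝ => Real.exp (-lam*(ξ' - xt) + (lam^2/2+1)*(t - t₀)))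
            (-lam * Real.exp (-lam*(ξ - xt) + (lam^2/2+1)*(t - t₀))) ξ := by
          have hl : HasDerivAt (fun ξ' : ℝ => -lam*(ξ' - xt) + (lam^2/2+1)*(t - t₀)) (-lam) ξ := by
            simpa using (((hasDerivAt_id ξ).sub_const xt).const_mul (-lam)).add_const ((lam^2/2+1)*(t - t₀))
          simpa [mul_comm] using hl.exp
        have h3 := h1.add h2
        simp only [zero_add] at h3
        exact h3
      · -- second x derivative
        have h2 : HasDerivAt (fun ξ : ℝ => -lam * Real.exp (-lam*(ξ - xt) + (lam^2/2+1)*(t - t₀)))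
            (lam^2 * Real.exp (-lam*(x - xt) + (lam^2/2+1)*(t - t₀))) x := by
          have hl : HasDerivAt (fun ξ' : ℝ => -lam*(ξ' - xt) + (lam^2/2+1)*(t - t₀)) (-lam) x := by
            simpa using (((hasDerivAt_id x).sub_const xt).const_mul (-lam)).add_const ((lam^2/2+1)*(t - t₀))
          have := (hl.exp).const_mul (-lam)
          exact this.congr_deriv (by ring)
        exact h2
      · -- supersolution inequality
        have hP : 0 < Real.exp (-lam*(x - xt) + (lam^2/2+1)*(t - t₀)) := Real.exp_pos _
        have hE : 0 < Real.exp (t - t₀) := Real.exp_pos _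
        simp only [hΦ]
        nlinarith [sq_nonneg (ε * Real.exp (t - t₀) + Real.exp (-lam*(x - xt) + (lam^2/2+1)*(t - t₀)))]
  intro x
  rcases le_or_gt xt x with hx | hx
  · exact key 16 x ht₀1 le_rfl hx
  · -- x < xt : direct
    have h1 : (1:ℝ) ≤ Real.exp (-lam*(x - xt) + (lam^2/2+1)*(16 - t₀)) := by
      apply Real.one_le_exp
      nlinarith [sq_nonneg lam]
    have h2 : 0 ≤ ε * Real.exp (16 - t₀) := by positivity
    have h3 := hu.le_one 16 (by norm_num) x
    have h4 := hu.nonneg 16 (by norm_num) x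
    linarith

lemma gauss16 (u : ℝ → ℝ → ℝ) (hu : IsFKPPSolution u) :
    ∀ x : ℝ, ∀ lam : ℝ, 0 ≤ lam →
      1 - u 16 x ≤ Real.exp (-lam*x + (lam^2/2+1)*16) := by
  intro x lam hlam
  set T : ℝ := Real.exp (-lam*x + (lam^2/2+1)*16) with hT
  have hTpos : 0 < T := Real.exp_pos _
  refine le_of_forall_pos_le_add ?_
  intro η hη
  -- choose xt > 0 small with exp(lam*xt) ≤ 1 + η/(2T)
  obtain ⟨xt, hxtpos, hxt⟩ : ∃ xt, 0 < xt ∧ Real.exp (lam*xt) * T ≤ T + η/2 := by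
    have hcont : Tendsto (fun z : ℝ => Real.exp (lam*z) * T) (nhds 0) (nhds T) := by
      have : Tendsto (fun z : ℝ => Real.exp (lam*z) * T) (nhds 0) (nhds (Real.exp (lam*0) * T)) := by
        apply Tendsto.mul _ tendsto_const_nhds
        exact (Real.continuous_exp.comp (continuous_const.mul continuous_id)).tendsto 0
      simpa using this
    have hev : ∀ᶠ z in nhdsWithin (0:ℝ) (Ioi 0), Real.exp (lam*z) * T ≤ T + η/2 := by
      apply eventually_nhdsWithin_of_eventually_nhds
      have : ∀ᶠ z in nhds (0:ℝ), Real.exp (lam*z) * T < T + η/2 :=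
        hcont.eventually_lt_const (by linarith)
      exact this.mono fun z hz => le_of_lt hz
    obtain ⟨z, hz1, hz2⟩ := (hev.and (eventually_mem_nhdsWithin (s := Ioi 0))).exists
    exact ⟨z, hz2, hz1⟩
  -- choose t₀ small with 1 - u t₀ xt ≤ η/(2 exp 16)
  set ε : ℝ := η / (2 * Real.exp 16) with hε
  have hεpos : 0 < ε := by positivity
  obtain ⟨t₀, ht₀pos, ht₀16, ht₀u⟩ : ∃ t₀, 0 < t₀ ∧ t₀ ≤ 16 ∧ 1 - u t₀ xt ≤ ε := by
    have htend := hu.init_pos xt hxtpos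
    have hev1 : ∀ᶠ t in nhdsWithin (0:ℝ) (Ioi 0), 1 - ε < u t xt :=
      htend.eventually_const_lt (by linarith)
    have hev2 : ∀ᶠ t in nhdsWithin (0:ℝ) (Ioi 0), t < 16 :=
      eventually_nhdsWithin_of_eventually_nhds (eventually_lt_nhds (by norm_num))
    obtain ⟨t₀, ⟨h1, h2⟩, h3⟩ :=
      ((hev1.and hev2).and (eventually_mem_nhdsWithin (s := Ioi 0))).exists
    exact ⟨t₀, h3, le_of_lt h2, by linarith⟩
  have hcb := crude_bound u hu t₀ xt ε lam ht₀pos ht₀16 hxtpos (le_of_lt hεpos) ht₀u hlam x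
  have hb1 : ε * Real.exp (16 - t₀) ≤ η/2 := by
    have : Real.exp (16 - t₀) ≤ Real.exp 16 := Real.exp_le_exp.2 (by linarith)
    calc ε * Real.exp (16 - t₀) ≤ ε * Real.exp 16 :=
          mul_le_mul_of_nonneg_left this (le_of_lt hεpos)
    _ = η/2 := by
          rw [hε]; field_simp
  have hb2 : Real.exp (-lam*(x - xt) + (lam^2/2+1)*(16 - t₀)) ≤ Real.exp (lam*xt) * T := by
    rw [hT, ← Real.exp_add]
    apply Real.exp_le_exp.2
    have h1 : 0 ≤ (lam^2/2+1) * t₀ := by positivity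
    nlinarith [sq_nonneg lam]
  linarith

lemma gaussPoint16 (u : ℝ → ℝ → ℝ) (hu : IsFKPPSolution u) :
    ∀ x : ℝ, 0 ≤ x → 1 - u 16 x ≤ Real.exp (16 - x^2/32) := by
  intro x hx
  have := gauss16 u hu x (x/16) (by positivity)
  calc 1 - u 16 x ≤ Real.exp (-(x/16)*x + ((x/16)^2/2+1)*16) := this
  _ = Real.exp (16 - x^2/32) := by congr 1; ring


noncomputable def rr : ℝ := Real.sqrt 2
noncomputable def mm (t : ℝ) : ℝ := rr * t - 3 / (2 * rr) * Real.log t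
noncomputable def MM (t : ℝ) : ℝ := Real.exp (150 - 600 / Real.sqrt t)
noncomputable def SS (t x : ℝ) : ℝ := x - mm t + 2
noncomputable def E1f (t x : ℝ) : ℝ := Real.exp (-(SS t x)^2/(2*t))
noncomputable def E2f (t x : ℝ) : ℝ := Real.exp (-(SS t x)^2/(4*t))
noncomputable def E3f (t x : ℝ) : ℝ := Real.exp (-rr*(x - mm t))
noncomputable def Psif (t x : ℝ) : ℝ := 2000 * SS t x * E1f t x + 300 * E2f t x
noncomputable def BB (t x : ℝ) : ℝ := MM t * Psif t x * E3f t x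
noncomputable def mp (t : ℝ) : ℝ := rr - 3*rr/(4*t)

lemma hrr2 : rr^2 = 2 := Real.sq_sqrt (by norm_num)
lemma hrrpos : 0 < rr := Real.sqrt_pos.2 (by norm_num)
lemma rr_lb : 1.4142 ≤ rr := by nlinarith [hrr2, hrrpos]
lemma rr_ub : rr ≤ 1.41422 := by nlinarith [hrr2, hrrpos]
lemma hrrne : rr ≠ 0 := ne_of_gt hrrpos

lemma aux34 : 3 / (2*rr) = 3*rr/4 := by
  rw [div_eq_div_iff (by nlinarith [hrrpos]) (by norm_num : (4:ℝ) ≠ 0)]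
  nlinarith [hrr2]

lemma mm_hasDeriv (t : ℝ) (ht : 0 < t) : HasDerivAt mm (mp t) t := by
  have hmm : mm = fun s : ℝ => rr * s - 3 / (2 * rr) * Real.log s := rfl
  rw [hmm]
  have h1 : HasDerivAt (fun s : ℝ => rr * s) rr t := by
    simpa using (hasDerivAt_id t).const_mul rr
  have h2 : HasDerivAt (fun s : ℝ => 3 / (2 * rr) * Real.log s) (3 / (2 * rr) * t⁻¹) t :=
    (Real.hasDerivAt_log (ne_of_gt ht)).const_mul _
  have h3 := h1.sub h2
  refine h3.congr_deriv ?_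
  rw [mp, aux34]
  field_simp

lemma MM_hasDeriv (t : ℝ) (ht : 0 < t) : HasDerivAt MM (MM t * (300/(t*Real.sqrt t))) t := by
  have hMM : MM = fun s : ℝ => Real.exp (150 - 600 / Real.sqrt s) := rfl
  rw [hMM]
  have hsq : Real.sqrt t ≠ 0 := ne_of_gt (Real.sqrt_pos.2 ht)
  have h1 : HasDerivAt (fun s : ℝ => Real.sqrt s) (1/(2*Real.sqrt t)) t :=
    Real.hasDerivAt_sqrt (ne_of_gt ht)
  have h2 : HasDerivAt (fun s : ℝ => 600 / Real.sqrt s)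
      (-(600 * (1/(2*Real.sqrt t)) / (Real.sqrt t)^2)) t := by
    have := (h1.inv hsq).const_mul (600:ℝ)
    refine this.congr_deriv ?_
    field_simp
  have h3 : HasDerivAt (fun s : ℝ => 150 - 600 / Real.sqrt s)
      (600 * (1/(2*Real.sqrt t)) / (Real.sqrt t)^2) t := by
    have := (hasDerivAt_const t (150:ℝ)).sub h2
    exact this.congr_deriv (by ring)
  have h4 := h3.exp
  convert h4 using 1
  rw [show (fun s : ℝ => Real.exp (150 - 600 / Real.sqrt s)) t = Real.exp (150 - 600 / Real.sqrt t) from rfl]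
  rw [Real.sq_sqrt (le_of_lt ht)]
  field_simp
  ring

noncomputable def Qf (t x : ℝ) : ℝ :=
  (2000*E1f t x*(1 - (SS t x)^2/t) - 300*E2f t x*(SS t x/(2*t))) - rr * Psif t x
noncomputable def BX (t x : ℝ) : ℝ := MM t * Qf t x * E3f t x
noncomputable def BXX (t x : ℝ) : ℝ :=
  MM t * ((2000*E1f t x*((SS t x)^3/t^2 - 3*SS t x/t)
    + 300*E2f t x*((SS t x)^2/(4*t^2) - 1/(2*t)))
    - 2*rr*(2000*E1f t x*(1 - (SS t x)^2/t) - 300*E2f t x*(SS t x/(2*t)))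
    + rr^2 * Psif t x) * E3f t x
noncomputable def BT (t x : ℝ) : ℝ :=
  MM t * ((300/(t*Real.sqrt t)) * Psif t x
    + 2000*E1f t x*(-(mp t) + (SS t x)^2*(mp t)/t + (SS t x)^3/(2*t^2))
    + 300*E2f t x*(SS t x*(mp t)/(2*t) + (SS t x)^2/(4*t^2))
    + rr*(mp t) * Psif t x) * E3f t x
noncomputable def AAf (t x : ℝ) : ℝ :=
  (300/(t*Real.sqrt t)) * Psif t x
  + (3*rr/(4*t))*(2000*E1f t x*(1 - (SS t x)^2/t))
  + 300*E2f t x*((SS t x)^2/(8*t^2) - 5/(4*t) - 3*rr*SS t x/(8*t^2))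

set_option maxHeartbeats 1000000 in
lemma BB_hasDeriv_x (t x : ℝ) (ht : 0 < t) :
    HasDerivAt (fun ξ => BB t ξ) (BX t x) x := by
  have htne : t ≠ 0 := ne_of_gt ht
  have hS : HasDerivAt (fun ξ : ℝ => ξ - mm t + 2) 1 x := by
    simpa using ((hasDerivAt_id x).sub_const (mm t)).add_const 2
  have he1 : HasDerivAt (fun ξ : ℝ => Real.exp (-(ξ - mm t + 2)^2/(2*t)))
      (Real.exp (-(x - mm t + 2)^2/(2*t)) * (-(2*(x - mm t + 2)^1*1)/(2*t))) x := by
    exact (((hS.pow 2).neg).div_const (2*t)).exp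
  have he2 : HasDerivAt (fun ξ : ℝ => Real.exp (-(ξ - mm t + 2)^2/(4*t)))
      (Real.exp (-(x - mm t + 2)^2/(4*t)) * (-(2*(x - mm t + 2)^1*1)/(4*t))) x := by
    exact (((hS.pow 2).neg).div_const (4*t)).exp
  have hPsi : HasDerivAt (fun ξ : ℝ =>
      2000 * ((ξ - mm t + 2) * Real.exp (-(ξ - mm t + 2)^2/(2*t)))
      + 300 * Real.exp (-(ξ - mm t + 2)^2/(4*t)))
      (2000 * (1 * Real.exp (-(x - mm t + 2)^2/(2*t))
        + (x - mm t + 2) * (Real.exp (-(x - mm t + 2)^2/(2*t)) * (-(2*(x - mm t + 2)^1*1)/(2*t))))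
      + 300 * (Real.exp (-(x - mm t + 2)^2/(4*t)) * (-(2*(x - mm t + 2)^1*1)/(4*t)))) x := by
    exact ((hS.mul he1).const_mul 2000).add (he2.const_mul 300)
  have hE3 : HasDerivAt (fun ξ : ℝ => Real.exp (-rr*(ξ - mm t)))
      (Real.exp (-rr*(x - mm t)) * (-rr*1)) x := by
    exact (((hasDerivAt_id x).sub_const (mm t)).const_mul (-rr)).exp
  have hprod := (hPsi.const_mul (MM t)).mul hE3
  have hfun : (fun ξ => BB t ξ) = (fun ξ =>
      MM t * (2000 * ((ξ - mm t + 2) * Real.exp (-(ξ - mm t + 2)^2/(2*t)))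
        + 300 * Real.exp (-(ξ - mm t + 2)^2/(4*t))) * Real.exp (-rr*(ξ - mm t))) := by
    funext ξ
    simp only [BB, Psif, E1f, E2f, E3f, SS]
    ring
  rw [hfun]
  refine hprod.congr_deriv ?_
  simp only [BX, Qf, Psif, E1f, E2f, E3f, SS]
  field_simp
  ring

set_option maxHeartbeats 1000000 in
lemma BX_hasDeriv_x (t x : ℝ) (ht : 0 < t) :
    HasDerivAt (fun ξ => BX t ξ) (BXX t x) x := by
  have htne : t ≠ 0 := ne_of_gt ht
  have hS : HasDerivAt (fun ξ : ℝ => ξ - mm t + 2) 1 x := by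
    simpa using ((hasDerivAt_id x).sub_const (mm t)).add_const 2
  have he1 : HasDerivAt (fun ξ : ℝ => Real.exp (-(ξ - mm t + 2)^2/(2*t)))
      (Real.exp (-(x - mm t + 2)^2/(2*t)) * (-(2*(x - mm t + 2)^1*1)/(2*t))) x :=
    (((hS.pow 2).neg).div_const (2*t)).exp
  have he2 : HasDerivAt (fun ξ : ℝ => Real.exp (-(ξ - mm t + 2)^2/(4*t)))
      (Real.exp (-(x - mm t + 2)^2/(4*t)) * (-(2*(x - mm t + 2)^1*1)/(4*t))) x :=
    (((hS.pow 2).neg).div_const (4*t)).exp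
  have hE3 : HasDerivAt (fun ξ : ℝ => Real.exp (-rr*(ξ - mm t)))
      (Real.exp (-rr*(x - mm t)) * (-rr*1)) x :=
    (((hasDerivAt_id x).sub_const (mm t)).const_mul (-rr)).exp
  -- Q as a function of ξ
  have hone : HasDerivAt (fun ξ : ℝ => 1 - (ξ - mm t + 2)^2/t)
      (-(2*(x - mm t + 2)^1*1)/t) x := by
    have := ((hS.pow 2).div_const t)
    have h2 := (hasDerivAt_const x (1:ℝ)).sub this
    exact h2.congr_deriv (by ring)
  have hq1 : HasDerivAt (fun ξ : ℝ =>
      2000*(Real.exp (-(ξ - mm t + 2)^2/(2*t))*(1 - (ξ - mm t + 2)^2/t)))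
      (2000*((Real.exp (-(x - mm t + 2)^2/(2*t)) * (-(2*(x - mm t + 2)^1*1)/(2*t)))*(1 - (x - mm t + 2)^2/t)
        + Real.exp (-(x - mm t + 2)^2/(2*t))*(-(2*(x - mm t + 2)^1*1)/t))) x :=
    (he1.mul hone).const_mul 2000
  have hq2 : HasDerivAt (fun ξ : ℝ =>
      300*(Real.exp (-(ξ - mm t + 2)^2/(4*t))*((ξ - mm t + 2)/(2*t))))
      (300*((Real.exp (-(x - mm t + 2)^2/(4*t)) * (-(2*(x - mm t + 2)^1*1)/(4*t)))*((x - mm t + 2)/(2*t))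
        + Real.exp (-(x - mm t + 2)^2/(4*t))*(1/(2*t)))) x := by
    have hdiv : HasDerivAt (fun ξ : ℝ => (ξ - mm t + 2)/(2*t)) (1/(2*t)) x := by
      have := hS.div_const (2*t)
      convert this using 1
    exact (he2.mul hdiv).const_mul 300
  have hq3 : HasDerivAt (fun ξ : ℝ =>
      rr * (2000 * ((ξ - mm t + 2) * Real.exp (-(ξ - mm t + 2)^2/(2*t)))
        + 300 * Real.exp (-(ξ - mm t + 2)^2/(4*t))))
      (rr * (2000 * (1 * Real.exp (-(x - mm t + 2)^2/(2*t))
        + (x - mm t + 2) * (Real.exp (-(x - mm t + 2)^2/(2*t)) * (-(2*(x - mm t + 2)^1*1)/(2*t))))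
      + 300 * (Real.exp (-(x - mm t + 2)^2/(4*t)) * (-(2*(x - mm t + 2)^1*1)/(4*t))))) x :=
    (((hS.mul he1).const_mul 2000).add (he2.const_mul 300)).const_mul rr
  have hQ := (hq1.sub hq2).sub hq3
  have hprod := (hQ.const_mul (MM t)).mul hE3
  have hfun : (fun ξ => BX t ξ) = (fun ξ =>
      MM t * ((2000*(Real.exp (-(ξ - mm t + 2)^2/(2*t))*(1 - (ξ - mm t + 2)^2/t))
        - 300*(Real.exp (-(ξ - mm t + 2)^2/(4*t))*((ξ - mm t + 2)/(2*t))))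
        - rr * (2000 * ((ξ - mm t + 2) * Real.exp (-(ξ - mm t + 2)^2/(2*t)))
          + 300 * Real.exp (-(ξ - mm t + 2)^2/(4*t))))
      * Real.exp (-rr*(ξ - mm t))) := by
    funext ξ
    simp only [BX, Qf, Psif, E1f, E2f, E3f, SS]
    ring
  rw [hfun]
  refine hprod.congr_deriv ?_
  simp only [BXX, Qf, Psif, E1f, E2f, E3f, SS, Pi.sub_apply, Pi.add_apply, Pi.mul_apply]
  generalize Real.exp (-(x - mm t + 2)^2/(2*t)) = e1
  generalize Real.exp (-(x - mm t + 2)^2/(4*t)) = e2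
  generalize Real.exp (-rr*(x - mm t)) = e3
  field_simp
  ring

set_option maxHeartbeats 1000000 in
lemma BB_hasDeriv_t (t x : ℝ) (ht : 0 < t) :
    HasDerivAt (fun τ => BB τ x) (BT t x) t := by
  have htne : t ≠ 0 := ne_of_gt ht
  have hsq : Real.sqrt t ≠ 0 := ne_of_gt (Real.sqrt_pos.2 ht)
  have hSt : HasDerivAt (fun τ : ℝ => x - mm τ + 2) (0 - mp t) t := by
    exact ((hasDerivAt_const t x).sub (mm_hasDeriv t ht)).add_const 2
  have h2t : HasDerivAt (fun τ : ℝ => 2*τ) 2 t := by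
    simpa using (hasDerivAt_id t).const_mul (2:ℝ)
  have h4t : HasDerivAt (fun τ : ℝ => 4*τ) 4 t := by
    simpa using (hasDerivAt_id t).const_mul (4:ℝ)
  have h2tne : (2:ℝ)*t ≠ 0 := by positivity
  have h4tne : (4:ℝ)*t ≠ 0 := by positivity
  have hq1 : HasDerivAt (fun τ : ℝ => -(x - mm τ + 2)^2/(2*τ))
      ((-(2*(x - mm t + 2)^1*(0 - mp t))*(2*t) - (-(x - mm t + 2)^2)*2)/(2*t)^2) t :=
    ((hSt.pow 2).neg).div h2t h2tne
  have hq2 : HasDerivAt (fun τ : ℝ => -(x - mm τ + 2)^2/(4*τ))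
      ((-(2*(x - mm t + 2)^1*(0 - mp t))*(4*t) - (-(x - mm t + 2)^2)*4)/(4*t)^2) t :=
    ((hSt.pow 2).neg).div h4t h4tne
  have he1 := hq1.exp
  have he2 := hq2.exp
  have hPsi := ((hSt.mul he1).const_mul 2000).add (he2.const_mul 300)
  have hE3 : HasDerivAt (fun τ : ℝ => Real.exp (-rr*(x - mm τ)))
      (Real.exp (-rr*(x - mm t)) * (-rr*(0 - mp t))) t :=
    (((hasDerivAt_const t x).sub (mm_hasDeriv t ht)).const_mul (-rr)).exp
  have hMMd := MM_hasDeriv t ht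
  have hprod := ((hMMd.mul hPsi).mul hE3)
  have hfun : (fun τ => BB τ x) = (fun τ =>
      MM τ * (2000 * ((x - mm τ + 2) * Real.exp (-(x - mm τ + 2)^2/(2*τ)))
        + 300 * Real.exp (-(x - mm τ + 2)^2/(4*τ))) * Real.exp (-rr*(x - mm τ))) := by
    funext τ
    simp only [BB, Psif, E1f, E2f, E3f, SS]
    ring
  rw [hfun]
  refine hprod.congr_deriv ?_
  simp only [BT, Psif, E1f, E2f, E3f, SS, Pi.sub_apply, Pi.add_apply, Pi.mul_apply]
  generalize Real.exp (-(x - mm t + 2)^2/(2*t)) = e1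
  generalize Real.exp (-(x - mm t + 2)^2/(4*t)) = e2
  generalize Real.exp (-rr*(x - mm t)) = e3
  field_simp
  ring
set_option maxHeartbeats 1000000 in
lemma Nident (t x : ℝ) (ht : 0 < t) :
    BT t x - (1/2)*BXX t x - BB t x = MM t * E3f t x * AAf t x := by
  have h2 := hrr2
  simp only [BT, BXX, BB, AAf, Psif, mp]
  linear_combination (MM t * E3f t x * (1/2 - 3/(4*t))
    * (2000*SS t x*E1f t x + 300*E2f t x)) * h2

lemma KeyPolyA (T S q rr : ℝ) (hT : 4 ≤ T) (hS : 0 < S) (hq : 0 < q) (hq1 : q ≤ 1)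
    (hrl : 1.4142 ≤ rr) (hru : rr ≤ 1.41422)
    (hc : S^2 ≤ T^2/2) (hqlow : 7/8 ≤ q) :
    0 ≤ 2400*T*(2000*S*(q*q) + 300*q) + 12000*rr*(q*q)*(T^2 - S^2)
      + 300*q*(S^2 - 10*T^2 - 3*rr*S) := by
  have hTpos : 0 < T := by linarith
  have hSb : S ≤ 0.7072*T := by
    by_contra hcon
    push_neg at hcon
    have h1 : (0.7072*T)*(0.7072*T) < S*S := by
      apply mul_self_lt_mul_self (by positivity) hcon
    nlinarith
  have ht1 : 0 ≤ 2400*T*(2000*S*(q*q) + 300*q) := by positivity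
  have hb1 : 3*rr*S ≤ 0.77*T^2 := by nlinarith
  have hb2 : 8485*(q*q)*T^2 ≤ 12000*rr*(q*q)*(T^2 - S^2) := by
    have k1 : (0:ℝ) ≤ T^2 - S^2 := by nlinarith
    have h1 := mul_nonneg (sub_nonneg.2 hrl) (mul_nonneg (mul_nonneg hq.le hq.le) k1)
    have h2 := mul_nonneg (mul_nonneg hq.le hq.le) (by linarith : (0:ℝ) ≤ (T^2 - S^2) - T^2/2)
    nlinarith [h1, h2]
  have hb3 : -(3231*q*T^2) ≤ 300*q*(S^2 - 10*T^2 - 3*rr*S) := by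
    nlinarith [sq_nonneg S, mul_pos hTpos hTpos]
  have hb4 : 3231*q*T^2 ≤ 8485*(q*q)*T^2 := by
    have h1 := mul_nonneg (mul_nonneg (sub_nonneg.2 hqlow) hq.le) (sq_nonneg T)
    have h2 := mul_nonneg hq.le (sq_nonneg T)
    nlinarith [h1, h2]
  linarith

lemma KeyPolyB (T S q rr : ℝ) (hT : 4 ≤ T) (hS : 0 < S) (hq : 0 < q) (hq1 : q ≤ 1)
    (hrl : 1.4142 ≤ rr) (hru : rr ≤ 1.41422)
    (hc1 : T^2/2 ≤ S^2) (hc2 : S^2 ≤ 24*T^2) (hqlow : 0.00247 ≤ q) :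
    0 ≤ 2400*T*(2000*S*(q*q) + 300*q) + 12000*rr*(q*q)*(T^2 - S^2)
      + 300*q*(S^2 - 10*T^2 - 3*rr*S) := by
  have hTpos : 0 < T := by linarith
  have hrrpos : (0:ℝ) < rr := by linarith
  have hSlb : 0.707*T ≤ S := by
    by_contra hcon
    push_neg at hcon
    have h1 : S*S < (0.707*T)*(0.707*T) :=
      mul_self_lt_mul_self (le_of_lt hS) hcon
    nlinarith
  have hSub : S ≤ 4.899*T := by
    by_contra hcon
    push_neg at hcon
    have h1 : (4.899*T)*(4.899*T) < S*S := by
      apply mul_self_lt_mul_self (by positivity) hcon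
    nlinarith
  have hb1 : 3393600*(q*q)*T^2 ≤ 2400*T*(2000*S*(q*q)) := by
    have h1 := mul_nonneg (sub_nonneg.2 hSlb)
      (mul_nonneg (mul_nonneg hq.le hq.le) hTpos.le)
    nlinarith [h1]
  have hb2 : -(390325*(q*q)*T^2) ≤ 12000*rr*(q*q)*(T^2 - S^2) := by
    have h1 := mul_nonneg (mul_nonneg hrrpos.le (sub_nonneg.2 hc2))
      (mul_nonneg hq.le hq.le)
    have h2 := mul_nonneg (by linarith : (0:ℝ) ≤ 390325 - 276000*rr)
      (mul_nonneg (sq_nonneg T) (mul_nonneg hq.le hq.le))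
    nlinarith [h1, h2]
  have hb3 : 3*rr*S ≤ 5.2*T^2 := by nlinarith
  have hb4 : -(4560*q*T^2) ≤ 300*q*(S^2 - 10*T^2 - 3*rr*S) := by
    nlinarith [sq_nonneg S, mul_pos hTpos hTpos]
  have hb5 : 4560*q*T^2 ≤ 3003275*(q*q)*T^2 := by
    have h1 := mul_nonneg (mul_nonneg (sub_nonneg.2 hqlow) hq.le) (sq_nonneg T)
    have h2 := mul_nonneg hq.le (sq_nonneg T)
    nlinarith [h1, h2]
  have ht0 : 0 ≤ 2400*T*(300*q) := by positivity
  nlinarith [hb1, hb2, hb4, hb5, ht0]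

lemma KeyPolyC (T S q rr : ℝ) (hT : 4 ≤ T) (hS : 0 < S) (hq : 0 < q) (hq1 : q ≤ 1)
    (hrl : 1.4142 ≤ rr) (hru : rr ≤ 1.41422)
    (hc : 24*T^2 ≤ S^2) (hqup : q ≤ 0.00249) :
    0 ≤ 2400*T*(2000*S*(q*q) + 300*q) + 12000*rr*(q*q)*(T^2 - S^2)
      + 300*q*(S^2 - 10*T^2 - 3*rr*S) := by
  have hTpos : 0 < T := by linarith
  have hrrpos : (0:ℝ) < rr := by linarith
  have hSlb : 4.898*T ≤ S := by
    by_contra hcon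
    push_neg at hcon
    have h1 : S*S < (4.898*T)*(4.898*T) :=
      mul_self_lt_mul_self (le_of_lt hS) hcon
    nlinarith
  have ht1 : 0 ≤ 2400*T*(2000*S*(q*q) + 300*q) := by positivity
  have hb1 : 3*rr*S ≤ 0.2166*S^2 := by
    have h1 : 19.592*T ≤ 4*S := by linarith
    nlinarith
  have hb2 : 110*q*S^2 ≤ 300*q*(S^2 - 10*T^2 - 3*rr*S) := by
    nlinarith [mul_pos hTpos hTpos]
  have hb3 : -(16971*(q*q)*S^2) ≤ 12000*rr*(q*q)*(T^2 - S^2) := by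
    have h1 := mul_nonneg (by linarith : (0:ℝ) ≤ 16971 - 12000*rr)
      (mul_nonneg (mul_nonneg hq.le hq.le) (sq_nonneg S))
    have h2 := mul_nonneg (mul_nonneg (by linarith : (0:ℝ) ≤ 12000*rr) (sq_nonneg T))
      (mul_nonneg hq.le hq.le)
    nlinarith [h1, h2]
  have hb4 : 16971*(q*q)*S^2 ≤ 110*q*S^2 := by
    have h1 := mul_nonneg (mul_nonneg hq.le (sq_nonneg S))
      (by linarith : (0:ℝ) ≤ 110 - 16971*q)
    nlinarith [h1]
  linarith

lemma exp_six_lt : Real.exp 6 < 403.43 := by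
  have h1 : Real.exp 1 < 2.7182818286 := Real.exp_one_lt_d9
  have h6 : Real.exp 6 = (Real.exp 1)^6 := by
    rw [← Real.exp_nat_mul]; norm_num
  rw [h6]
  calc (Real.exp 1)^6 ≤ (2.7182818286:ℝ)^6 :=
        pow_le_pow_left₀ (Real.exp_pos 1).le h1.le 6
  _ < 403.43 := by norm_num

lemma exp_six_gt : 401.7 < Real.exp 6 := by
  have h1 : 2.7182818283 < Real.exp 1 := Real.exp_one_gt_d9
  have h6 : Real.exp 6 = (Real.exp 1)^6 := by
    rw [← Real.exp_nat_mul]; norm_num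
  rw [h6]
  calc (401.7:ℝ) < (2.7182818283:ℝ)^6 := by norm_num
  _ ≤ (Real.exp 1)^6 := pow_le_pow_left₀ (by norm_num) h1.le 6

lemma exp_neg_six_gt : 0.00247 < Real.exp (-6) := by
  rw [Real.exp_neg, inv_eq_one_div, lt_div_iff₀ (Real.exp_pos 6)]
  nlinarith [exp_six_lt, Real.exp_pos 6]

lemma exp_neg_six_lt : Real.exp (-6) < 0.00249 := by
  rw [Real.exp_neg, inv_eq_one_div, div_lt_iff₀ (Real.exp_pos 6)]
  nlinarith [exp_six_gt]

set_option maxHeartbeats 1000000 in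
lemma KeyIneq (t x : ℝ) (ht : 16 ≤ t) (hS : 0 < SS t x) : 0 ≤ AAf t x := by
  have htpos : (0:ℝ) < t := by linarith
  set S := SS t x with hSdef
  set T := Real.sqrt t with hT
  have hT2 : T^2 = t := Real.sq_sqrt htpos.le
  have hT4 : (4:ℝ) ≤ T := by
    have h1 : Real.sqrt 16 ≤ T := Real.sqrt_le_sqrt ht
    have h2 : Real.sqrt 16 = 4 := by
      rw [show (16:ℝ) = 4^2 by norm_num]
      exact Real.sqrt_sq (by norm_num)
    linarith [h2 ▸ h1]
  have hTpos : (0:ℝ) < T := by linarith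
  set q := E2f t x with hq
  have hqpos : 0 < q := Real.exp_pos _
  have hq1 : q ≤ 1 := by
    rw [hq]
    simp only [E2f]
    have h0 : -(SS t x)^2/(4*t) ≤ 0 := by
      apply div_nonpos_of_nonpos_of_nonneg
      · simp [sq_nonneg]
      · linarith
    calc Real.exp (-(SS t x)^2/(4*t)) ≤ Real.exp 0 := Real.exp_le_exp.2 h0
    _ = 1 := Real.exp_zero
  have hE1q : E1f t x = q * q := by
    rw [hq]; simp only [E1f, E2f]
    rw [← Real.exp_add]; congr 1; field_simp; ring
  have hqval : q = Real.exp (-S^2/(4*T^2)) := by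
    rw [hq]; simp only [E2f]; rw [← hSdef, ← hT2]
  have hAA : AAf t x = (2400*T*(2000*S*(q*q) + 300*q) + 12000*rr*(q*q)*(T^2 - S^2)
      + 300*q*(S^2 - 10*T^2 - 3*rr*S)) / (8*T^4) := by
    simp only [AAf, Psif]
    rw [hE1q, ← hq, ← hSdef, ← hT2]
    rw [Real.sqrt_sq hTpos.le]
    have hTne : T ≠ 0 := ne_of_gt hTpos
    field_simp
    ring
  rw [hAA]
  apply div_nonneg _ (by positivity)
  rcases le_or_gt (S^2) (T^2/2) with hc | hc
  · apply KeyPolyA T S q rr hT4 hS hqpos hq1 rr_lb rr_ub hc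
    rw [hqval]
    have h1 := Real.add_one_le_exp (-S^2/(4*T^2))
    have h2 : S^2/(4*T^2) ≤ 1/8 := by
      rw [div_le_div_iff₀ (by positivity) (by norm_num)]
      nlinarith
    have h3 : -S^2/(4*T^2) = -(S^2/(4*T^2)) := by ring
    linarith [h3 ▸ h1]
  · rcases le_or_gt (S^2) (24*T^2) with hc2 | hc2
    · apply KeyPolyB T S q rr hT4 hS hqpos hq1 rr_lb rr_ub hc.le hc2
      rw [hqval]
      have h2 : S^2/(4*T^2) ≤ 6 := by
        rw [div_le_iff₀ (by positivity)]
        nlinarith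
      have h1 : Real.exp (-6) ≤ Real.exp (-S^2/(4*T^2)) := by
        apply Real.exp_le_exp.2
        have h3 : -S^2/(4*T^2) = -(S^2/(4*T^2)) := by ring
        rw [h3]
        linarith
      linarith [exp_neg_six_gt]
    · apply KeyPolyC T S q rr hT4 hS hqpos hq1 rr_lb rr_ub hc2.le
      rw [hqval]
      have h2 : (6:ℝ) ≤ S^2/(4*T^2) := by
        rw [le_div_iff₀ (by positivity)]
        nlinarith
      have h1 : Real.exp (-S^2/(4*T^2)) ≤ Real.exp (-6) := by
        apply Real.exp_le_exp.2
        have h3 : -S^2/(4*T^2) = -(S^2/(4*T^2)) := by ring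
        rw [h3]
        linarith
      linarith [exp_neg_six_lt]

-- ==================== new content ====================

lemma exp_five_lt : Real.exp 5 < 149 := by
  have h1 : Real.exp 1 < 2.7182818286 := Real.exp_one_lt_d9
  have h6 : Real.exp 5 = (Real.exp 1)^5 := by
    rw [← Real.exp_nat_mul]; norm_num
  rw [h6]
  calc (Real.exp 1)^5 ≤ (2.7182818286:ℝ)^5 :=
        pow_le_pow_left₀ (Real.exp_pos 1).le h1.le 5
  _ < 149 := by norm_num

lemma log_sixteen : Real.log 16 = 4 * Real.log 2 := by
  rw [show (16:ℝ) = 2^4 by norm_num, Real.log_pow]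
  norm_num

lemma mm16_lb : 19.686 ≤ mm 16 := by
  have hl := Real.log_two_lt_d9
  have hlg := Real.log_two_gt_d9
  have h34 : 3 / (2*rr) = 3*rr/4 := by
    rw [div_eq_div_iff (by nlinarith [hrrpos]) (by norm_num : (4:ℝ) ≠ 0)]
    nlinarith [hrr2]
  rw [mm, log_sixteen, h34]
  nlinarith [rr_lb, rr_ub]

lemma mm16_ub : mm 16 ≤ 19.687 := by
  have hl := Real.log_two_lt_d9
  have hlg := Real.log_two_gt_d9
  have h34 : 3 / (2*rr) = 3*rr/4 := by
    rw [div_eq_div_iff (by nlinarith [hrrpos]) (by norm_num : (4:ℝ) ≠ 0)]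
    nlinarith [hrr2]
  rw [mm, log_sixteen, h34]
  nlinarith [rr_lb, rr_ub]

lemma MM16 : MM 16 = 1 := by
  rw [MM, show Real.sqrt 16 = 4 by
    rw [show (16:ℝ) = 4^2 by norm_num]; exact Real.sqrt_sq (by norm_num)]
  norm_num

lemma MM_ge_one (t : ℝ) (ht : 16 ≤ t) : 1 ≤ MM t := by
  rw [MM]
  apply Real.one_le_exp
  have h1 : (4:ℝ) ≤ Real.sqrt t := by
    have h2 : Real.sqrt 16 ≤ Real.sqrt t := Real.sqrt_le_sqrt ht
    rwa [show Real.sqrt 16 = 4 by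
      rw [show (16:ℝ) = 4^2 by norm_num]; exact Real.sqrt_sq (by norm_num)] at h2
  have h2 : 600 / Real.sqrt t ≤ 150 := by
    rw [div_le_iff₀ (by linarith)]
    linarith
  linarith

lemma MM_le (t : ℝ) (ht : 0 < t) : MM t ≤ Real.exp 150 := by
  rw [MM]
  apply Real.exp_le_exp.2
  have : 0 < 600 / Real.sqrt t := by positivity
  linarith

-- the numeric core of the initial comparison
lemma init_exp_bound (M yy r : ℝ) (hM : 19.686 ≤ M) (hy : 0 ≤ yy)
    (hr0 : 1.4142 ≤ r) (hr : r ≤ 1.41422) :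
    16 + r*yy + (yy+2)^2/64 - (M+yy)^2/32 ≤ 5 := by
  nlinarith [sq_nonneg (yy - 7.9), sq_nonneg (M - 19.686),
    mul_nonneg hy (sub_nonneg.2 hM), mul_nonneg hy hy]

lemma sqrt16 : Real.sqrt 16 = 4 := by
  rw [show (16:ℝ) = 4^2 by norm_num]; exact Real.sqrt_sq (by norm_num)

lemma BB_contOn : ContinuousOn (fun p : ℝ × ℝ => BB p.1 p.2) {p : ℝ × ℝ | 0 < p.1} := by
  have hfst : ContinuousOn (fun p : ℝ × ℝ => p.1) {p : ℝ × ℝ | 0 < p.1} :=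
    continuous_fst.continuousOn
  have hsnd : ContinuousOn (fun p : ℝ × ℝ => p.2) {p : ℝ × ℝ | 0 < p.1} :=
    continuous_snd.continuousOn
  have hne : ∀ p : ℝ × ℝ, p ∈ {p : ℝ × ℝ | 0 < p.1} → p.1 ≠ 0 :=
    fun p hp => ne_of_gt hp
  have hlog : ContinuousOn (fun p : ℝ × ℝ => Real.log p.1) {p : ℝ × ℝ | 0 < p.1} :=
    ContinuousOn.log hfst hne
  have hmm : ContinuousOn (fun p : ℝ × ℝ => mm p.1) {p : ℝ × ℝ | 0 < p.1} := by
    simp only [mm]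
    exact ((continuousOn_const.mul hfst).sub (continuousOn_const.mul hlog))
  have hS : ContinuousOn (fun p : ℝ × ℝ => SS p.1 p.2) {p : ℝ × ℝ | 0 < p.1} := by
    simp only [SS]
    exact (hsnd.sub hmm).add continuousOn_const
  have hsqrt : ContinuousOn (fun p : ℝ × ℝ => Real.sqrt p.1) {p : ℝ × ℝ | 0 < p.1} :=
    (Real.continuous_sqrt.comp continuous_fst).continuousOn
  have hMM : ContinuousOn (fun p : ℝ × ℝ => MM p.1) {p : ℝ × ℝ | 0 < p.1} := by
    simp only [MM]
    apply Real.continuous_exp.comp_continuousOn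
    apply ContinuousOn.sub continuousOn_const
    exact ContinuousOn.div continuousOn_const hsqrt
      (fun p hp => ne_of_gt (Real.sqrt_pos.2 hp))
  have h2t : ∀ p : ℝ × ℝ, p ∈ {p : ℝ × ℝ | 0 < p.1} → 2 * p.1 ≠ 0 := by
    intro p hp; have : (0:ℝ) < p.1 := hp; positivity
  have h4t : ∀ p : ℝ × ℝ, p ∈ {p : ℝ × ℝ | 0 < p.1} → 4 * p.1 ≠ 0 := by
    intro p hp; have : (0:ℝ) < p.1 := hp; positivity
  have hE1 : ContinuousOn (fun p : ℝ × ℝ => E1f p.1 p.2) {p : ℝ × ℝ | 0 < p.1} := by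
    simp only [E1f]
    apply Real.continuous_exp.comp_continuousOn
    exact ContinuousOn.div ((hS.pow 2).neg) (continuousOn_const.mul hfst) h2t
  have hE2 : ContinuousOn (fun p : ℝ × ℝ => E2f p.1 p.2) {p : ℝ × ℝ | 0 < p.1} := by
    simp only [E2f]
    apply Real.continuous_exp.comp_continuousOn
    exact ContinuousOn.div ((hS.pow 2).neg) (continuousOn_const.mul hfst) h4t
  have hE3 : ContinuousOn (fun p : ℝ × ℝ => E3f p.1 p.2) {p : ℝ × ℝ | 0 < p.1} := by
    simp only [E3f]
    apply Real.continuous_exp.comp_continuousOn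
    exact (continuousOn_const.mul (hsnd.sub hmm))
  have hPsi : ContinuousOn (fun p : ℝ × ℝ => Psif p.1 p.2) {p : ℝ × ℝ | 0 < p.1} := by
    simp only [Psif]
    exact ((continuousOn_const.mul hS).mul hE1).add (continuousOn_const.mul hE2)
  simp only [BB]
  exact (hMM.mul hPsi).mul hE3

lemma BB_nonneg (s z : ℝ) (hS : 0 ≤ SS s z) : 0 ≤ BB s z := by
  rw [BB, Psif]
  have h1 : 0 ≤ MM s := (Real.exp_pos _).le
  have h2 : 0 ≤ E1f s z := (Real.exp_pos _).le
  have h3 : 0 ≤ E2f s z := (Real.exp_pos _).le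
  have h4 : 0 ≤ E3f s z := (Real.exp_pos _).le
  have h5 : 0 ≤ 2000 * SS s z * E1f s z + 300 * E2f s z := by positivity
  positivity

lemma BB_le_bound (t y : ℝ) (ht : 16 ≤ t) (hy : 0 ≤ y) :
    BB t (mm t + y) ≤ 2300 * Real.exp 150 * (y+2) * Real.exp (-rr*y) := by
  have htpos : (0:ℝ) < t := by linarith
  have hS : SS t (mm t + y) = y + 2 := by simp only [SS]; ring
  have hE3 : E3f t (mm t + y) = Real.exp (-rr*y) := by
    simp only [E3f]; congr 1; ring
  have hE1 : E1f t (mm t + y) ≤ 1 := by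
    simp only [E1f]
    calc Real.exp (-(SS t (mm t + y))^2/(2*t)) ≤ Real.exp 0 := by
          apply Real.exp_le_exp.2
          apply div_nonpos_of_nonpos_of_nonneg (by simp [sq_nonneg]) (by linarith)
    _ = 1 := Real.exp_zero
  have hE2 : E2f t (mm t + y) ≤ 1 := by
    simp only [E2f]
    calc Real.exp (-(SS t (mm t + y))^2/(4*t)) ≤ Real.exp 0 := by
          apply Real.exp_le_exp.2
          apply div_nonpos_of_nonpos_of_nonneg (by simp [sq_nonneg]) (by linarith)
    _ = 1 := Real.exp_zero
  have hE1p : 0 ≤ E1f t (mm t + y) := (Real.exp_pos _).le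
  have hE2p : 0 ≤ E2f t (mm t + y) := (Real.exp_pos _).le
  have hPsi : Psif t (mm t + y) ≤ 2300*(y+2) := by
    rw [Psif, hS]
    have h1 : 2000 * (y+2) * E1f t (mm t + y) ≤ 2000 * (y+2) := by
      nlinarith [hE1, hE1p]
    have h2 : 300 * E2f t (mm t + y) ≤ 300 := by linarith
    nlinarith
  have hPsip : 0 ≤ Psif t (mm t + y) := by
    rw [Psif, hS]; positivity
  have hMM := MM_le t htpos
  have hMMp : 0 ≤ MM t := (Real.exp_pos _).le
  have hE3p : 0 ≤ Real.exp (-rr*y) := (Real.exp_pos _).le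
  rw [BB, hE3]
  calc MM t * Psif t (mm t + y) * Real.exp (-rr*y)
      ≤ Real.exp 150 * (2300*(y+2)) * Real.exp (-rr*y) := by
        apply mul_le_mul_of_nonneg_right _ hE3p
        apply mul_le_mul hMM hPsi hPsip (Real.exp_pos _).le
  _ = 2300 * Real.exp 150 * (y+2) * Real.exp (-rr*y) := by ring

set_option maxHeartbeats 1000000 in
lemma mainBound (u : ℝ → ℝ → ℝ) (hu : IsFKPPSolution u) (t : ℝ) (ht : 16 ≤ t)
    (y : ℝ) (hy : 0 ≤ y) :
    1 - u t (mm t + y) ≤ 2300 * Real.exp 150 * (y+2) * Real.exp (-rr*y) := by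
  set γ : ℝ → ℝ := fun s => rr * (max s 16) - 3 / (2 * rr) * Real.log (max s 16) with hγ
  have hγeq : ∀ s, 16 ≤ s → γ s = mm s := by
    intro s hs
    rw [hγ]
    simp only [mm, max_eq_left hs]
  have hγc : Continuous γ := by
    rw [hγ]
    apply Continuous.sub
    · exact continuous_const.mul (continuous_id.max continuous_const)
    · apply Continuous.mul continuous_const
      apply Continuous.log (continuous_id.max continuous_const)
      intro x hx
      have h16 : (16:ℝ) ≤ max x 16 := le_max_right _ _
      simp only [id_eq] at hx
      rw [hx] at h16; norm_num at h16
  have hmmMono : StrictMonoOn mm (Icc 16 t) := by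
    apply strictMonoOn_of_deriv_pos (convex_Icc _ _)
    · intro s hs
      exact (mm_hasDeriv s (by linarith [hs.1])).continuousAt.continuousWithinAt
    · intro s hs
      rw [interior_Icc] at hs
      have hs16 : (16:ℝ) < s := hs.1
      rw [(mm_hasDeriv s (by linarith)).deriv]
      rw [mp]
      have h1 : 3*rr/(4*s) < rr := by
        rw [div_lt_iff₀ (by linarith : (0:ℝ) < 4*s)]
        nlinarith [hrrpos]
      linarith
  have hγm : MonotoneOn γ (Icc 16 t) := by
    intro a ha b hb hab
    rw [hγeq a ha.1, hγeq b hb.1]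
    rcases eq_or_lt_of_le hab with h | h
    · rw [h]
    · exact (hmmMono ha hb h).le
  have hΦc : ContinuousOn (fun p : ℝ × ℝ => min 2 (BB p.1 p.2)) {p : ℝ × ℝ | 0 < p.1} :=
    continuous_min.comp_continuousOn (continuousOn_const.prodMk BB_contOn)
  have hΦ0 : ∀ s z, 16 ≤ s → s ≤ t → γ s ≤ z → 0 ≤ min 2 (BB s z) := by
    intro s z hs _ hz
    rw [hγeq s hs] at hz
    apply le_min (by norm_num)
    apply BB_nonneg
    simp only [SS]; linarith
  have hinit : ∀ z, γ 16 ≤ z → 1 - u 16 z ≤ min 2 (BB 16 z) := by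
    intro z hz
    rw [hγeq 16 le_rfl] at hz
    have hu1 := hu.nonneg 16 (by norm_num) z
    apply le_min (by linarith)
    -- 1 - u 16 z ≤ BB 16 z
    set yy := z - mm 16 with hyy
    have hyy0 : 0 ≤ yy := by rw [hyy]; linarith
    have hS : SS 16 z = yy + 2 := by simp only [SS, hyy]
    have hE3 : E3f 16 z = Real.exp (-rr*yy) := by
      simp only [E3f, hyy]
    have hlow : 300 * Real.exp (-(yy+2)^2/64) * Real.exp (-rr*yy) ≤ BB 16 z := by
      rw [BB, MM16, Psif, hS, hE3, one_mul]
      have h1 : 0 ≤ 2000 * (yy+2) * E1f 16 z :=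
        mul_nonneg (by linarith) (Real.exp_pos _).le
      have h2 : E2f 16 z = Real.exp (-(yy+2)^2/64) := by
        simp only [E2f, hS]; norm_num
      rw [h2]
      nlinarith [mul_nonneg h1 (Real.exp_pos (-rr*yy)).le]
    rcases le_or_gt yy 3 with hc | hc
    · -- use 1 ≤ lower bound
      have hexp : (yy+2)^2/64 + rr*yy ≤ 5 := by
        nlinarith [rr_ub, rr_lb]
      have h300 : 1 ≤ 300 * Real.exp (-(yy+2)^2/64) * Real.exp (-rr*yy) := by
        rw [mul_assoc, ← Real.exp_add]
        have h1 : Real.exp (-(yy+2)^2/64 + -rr*yy) = Real.exp (-((yy+2)^2/64 + rr*yy)) := by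
          congr 1; ring
        rw [h1, Real.exp_neg]
        rw [show (1:ℝ) = 300 * (300:ℝ)⁻¹ by norm_num]
        apply mul_le_mul_of_nonneg_left _ (by norm_num)
        apply inv_anti₀ (Real.exp_pos _)
        calc Real.exp ((yy+2)^2/64 + rr*yy) ≤ Real.exp 5 := Real.exp_le_exp.2 hexp
        _ ≤ 149 := exp_five_lt.le
        _ ≤ 300 := by norm_num
      linarith
    · -- use the Gaussian bound
      have hz0 : 0 ≤ z := by
        have := mm16_lb; rw [hyy] at *; linarith
      have hg := gaussPoint16 u hu z hz0
      have hzeq : z = mm 16 + yy := by rw [hyy]; ring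
      have hexp : 16 - z^2/32 + ((yy+2)^2/64 + rr*yy) ≤ 5 := by
        rw [hzeq]
        have := init_exp_bound (mm 16) yy rr mm16_lb hyy0 rr_lb rr_ub
        linarith
      have hcmp : Real.exp (16 - z^2/32) ≤ 300 * Real.exp (-(yy+2)^2/64) * Real.exp (-rr*yy) := by
        rw [mul_assoc, ← Real.exp_add]
        have h1 : Real.exp (-(yy+2)^2/64 + -rr*yy) = Real.exp (-((yy+2)^2/64 + rr*yy)) := by
          congr 1; ring
        rw [h1]
        rw [show (16 - z^2/32 : ℝ) = (16 - z^2/32 + ((yy+2)^2/64 + rr*yy)) + (-((yy+2)^2/64 + rr*yy)) by ring]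
        rw [Real.exp_add]
        apply mul_le_mul_of_nonneg_right _ (Real.exp_pos _).le
        calc Real.exp (16 - z^2/32 + ((yy+2)^2/64 + rr*yy)) ≤ Real.exp 5 := Real.exp_le_exp.2 hexp
        _ ≤ 149 := exp_five_lt.le
        _ ≤ 300 := by norm_num
      linarith
  have hbdry : ∀ s, 16 ≤ s → s ≤ t → 1 - u s (γ s) ≤ min 2 (BB s (γ s)) := by
    intro s hs hst
    have hs0 : (0:ℝ) < s := by linarith
    rw [hγeq s hs]
    have hu1 := hu.nonneg s hs0 (mm s)
    apply le_min (by linarith)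
    -- 1 ≤ BB s (mm s)
    have hS : SS s (mm s) = 2 := by simp only [SS]; ring
    have hE3 : E3f s (mm s) = 1 := by
      simp only [E3f]; norm_num
    have hE2 : E2f s (mm s) = Real.exp (-(1/s)) := by
      simp only [E2f, hS]
      congr 1
      rw [show ((2:ℝ))^2 = 4 by norm_num]
      field_simp
    have h1 : (15:ℝ)/16 ≤ Real.exp (-(1/s)) := by
      have := Real.add_one_le_exp (-(1/s))
      have h2 : 1/s ≤ 1/16 := one_div_le_one_div_of_le (by norm_num) hs
      linarith
    have hBB : 1 ≤ BB s (mm s) := by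
      rw [BB, Psif, hS, hE3, hE2, mul_one]
      have h2 : 0 ≤ 2000 * 2 * E1f s (mm s) :=
        mul_nonneg (by norm_num) (Real.exp_pos _).le
      have h3 := MM_ge_one s hs
      nlinarith
    linarith [hBB]
  have hbranch : ∀ s z, 16 < s → s ≤ t → γ s < z → min 2 (BB s z) < 1 - u s z →
      ∃ (φ : ℝ → ℝ → ℝ) (φt : ℝ) (φx : ℝ → ℝ) (φxx : ℝ),
        (∀ t' x', 16 ≤ t' → t' ≤ t → γ t' ≤ x' → min 2 (BB t' x') ≤ φ t' x') ∧
        φ s z = min 2 (BB s z) ∧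
        HasDerivAt (fun τ => φ τ z) φt s ∧
        (∀ᶠ ξ in nhds z, HasDerivAt (fun ξ' => φ s ξ') (φx ξ) ξ) ∧
        HasDerivAt φx φxx z ∧
        (1/2) * φxx + φ s z - (φ s z)^2 ≤ φt := by
    intro s z hs16 hst hγz _
    have hs0 : (0:ℝ) < s := by linarith
    have hmmz : mm s < z := by rw [hγeq s hs16.le] at hγz; exact hγz
    have hSpos : 0 < SS s z := by simp only [SS]; linarith
    rcases le_or_gt 2 (BB s z) with hc | hc
    · refine ⟨fun _ _ => 2, 0, fun _ => 0, 0, ?_, ?_, ?_, ?_, ?_, ?_⟩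
      · intro t' x' _ _ _; exact min_le_left _ _
      · rw [min_eq_left hc]
      · exact hasDerivAt_const _ _
      · filter_upwards with ξ; exact hasDerivAt_const _ _
      · exact hasDerivAt_const _ _
      · norm_num
    · refine ⟨BB, BT s z, BX s, BXX s z, ?_, ?_, ?_, ?_, ?_, ?_⟩
      · intro t' x' _ _ _; exact min_le_right _ _
      · rw [min_eq_right hc.le]
      · exact BB_hasDeriv_t s z hs0
      · filter_upwards with ξ; exact BB_hasDeriv_x s ξ hs0
      · exact BX_hasDeriv_x s z hs0
      · have hN := Nident s z hs0
        have hA := KeyIneq s z hs16.le hSpos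
        have hprod : 0 ≤ MM s * E3f s z * AAf s z :=
          mul_nonneg (mul_nonneg (Real.exp_pos _).le (Real.exp_pos _).le) hA
        nlinarith [sq_nonneg (BB s z)]
  have hcomp := comp_principle u hu 16 t (by norm_num) ht γ hγc hγm
    (fun s z => min 2 (BB s z)) hΦc hΦ0 hinit hbdry hbranch
  have hres := hcomp t (mm t + y) ht le_rfl (by rw [hγeq t ht]; linarith)
  calc 1 - u t (mm t + y) ≤ min 2 (BB t (mm t + y)) := hres
  _ ≤ BB t (mm t + y) := min_le_right _ _
  _ ≤ 2300 * Real.exp 150 * (y+2) * Real.exp (-rr*y) := BB_le_bound t y ht hy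


/-- **Upper bound for Bramson's theorem.** There is `C₅ > 0` such that for `t ≥ 1` and
`y ∈ [0, √t]`, `P(M_t > √2·t − (3/(2√2))·log t + y) ≤ C₅·(y+2)⁴·e^{−√2·y}`, i.e.
`u(t, √2·t − (3/(2√2))·log t + y) ≥ 1 − C₅·(y+2)⁴·e^{−√2·y}`. -/
theorem bramson_upper (u : ℝ → ℝ → ℝ) (hu : IsFKPPSolution u) :
    ∃ C₅ > (0:ℝ), ∀ t ≥ (1:ℝ), ∀ y ∈ Icc (0:ℝ) (Real.sqrt t),
      u t (Real.sqrt 2 * t - 3 / (2 * Real.sqrt 2) * Real.log t + y)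
        ≥ 1 - C₅ * (y + 2)^4 * Real.exp (-(Real.sqrt 2) * y) := by
  refine ⟨2300 * Real.exp 150, by positivity, ?_⟩
  intro t ht y hy
  obtain ⟨hy0, hysq⟩ := hy
  have harg : Real.sqrt 2 * t - 3 / (2 * Real.sqrt 2) * Real.log t + y = mm t + y := rfl
  rw [ge_iff_le, harg]
  have hrr_eq : Real.exp (-(Real.sqrt 2) * y) = Real.exp (-rr * y) := rfl
  rw [hrr_eq]
  have hpow : (y + 2) ≤ (y + 2)^4 := by
    have h8 : (8:ℝ) ≤ (y+2)^3 := by nlinarith [hy0, sq_nonneg y]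
    have := mul_le_mul_of_nonneg_left h8 (by linarith : (0:ℝ) ≤ y+2)
    nlinarith [hy0]
  rcases le_or_gt 16 t with h16 | h16
  · have hmain := mainBound u hu t h16 y hy0
    have hexp_pos : (0:ℝ) ≤ Real.exp (-rr*y) := (Real.exp_pos _).le
    have h2 : 2300 * Real.exp 150 * (y+2) * Real.exp (-rr*y)
        ≤ 2300 * Real.exp 150 * (y+2)^4 * Real.exp (-rr*y) := by
      apply mul_le_mul_of_nonneg_right _ hexp_pos
      exact mul_le_mul_of_nonneg_left hpow (by positivity)
    linarith [hmain, h2]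
  · have htpos : (0:ℝ) < t := by linarith
    have hu0 := hu.nonneg t htpos (mm t + y)
    have hy4 : y ≤ 4 := by
      have h1 : Real.sqrt t ≤ Real.sqrt 16 := Real.sqrt_le_sqrt (by linarith)
      rw [sqrt16] at h1; linarith
    have hexp6 : Real.exp (-6) ≤ Real.exp (-rr*y) := by
      apply Real.exp_le_exp.2
      nlinarith [rr_ub, rr_lb, hy0, hy4]
    have h16' : (16:ℝ) ≤ (y+2)^4 := by nlinarith [hy0, sq_nonneg y]
    have h144 : (1:ℝ) ≤ Real.exp 144 := Real.one_le_exp (by norm_num)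
    have s1 : 2300 * Real.exp 150 * 16 * Real.exp (-6)
        ≤ 2300 * Real.exp 150 * (y+2)^4 * Real.exp (-rr*y) := by
      apply mul_le_mul (mul_le_mul_of_nonneg_left h16' (by positivity)) hexp6
        (Real.exp_pos _).le (by positivity)
    have s2 : (1:ℝ) ≤ 2300 * Real.exp 150 * 16 * Real.exp (-6) := by
      have hprod : Real.exp 150 * Real.exp (-6) = Real.exp 144 := by
        rw [← Real.exp_add]; norm_num
      calc (1:ℝ) ≤ Real.exp 144 := h144
      _ ≤ 2300 * 16 * Real.exp 144 := by nlinarith [Real.exp_pos 144]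
      _ = 2300 * Real.exp 150 * 16 * Real.exp (-6) := by rw [← hprod]; ring
    linarith
end

section
/- There exists a constant c > 0 such that for all t ≥ 2, ∫_{1}^{t−1} e^{−(3·log t/(2t))·s} · s^{−3/2} · (t−s)^{−3} ds ≤ c·t^{−3}. -/
set_option maxHeartbeats 1000000


open Real

/-- The main integral estimate in Lemma 2.2 of the paper: there is `c > 0` such that for
`t ≥ 2`, `∫_1^{t−1} e^{−(3 log t/2t)s} s^{−3/2} (t−s)^{−3} ds ≤ c·t^{−3}`. -/
theorem integral_estimate_lem22 :
    ∃ c > (0:ℝ), ∀ t ≥ (2:ℝ),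
      ∫ s in (1:ℝ)..(t - 1),
          Real.exp (-(3 * Real.log t / (2 * t)) * s) * s ^ (-(3:ℝ)/2) * (t - s) ^ (-(3:ℝ))
        ≤ c * t ^ (-(3:ℝ)) := by
  refine ⟨42, by norm_num, ?_⟩
  intro t ht
  have ht0 : (0:ℝ) < t := by linarith
  have h1t : (1:ℝ) ≤ t - 1 := by linarith
  have hlt : 0 < Real.log t := Real.log_pos (by linarith)
  set β : ℝ := 3 * Real.log t / (2 * t) with hβ
  have hβ0 : 0 ≤ β := by positivity
  have hq : (0:ℝ) < t ^ ((1:ℝ)/4) := Real.rpow_pos_of_pos ht0 _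
  have hq3 : (0:ℝ) < t ^ ((3:ℝ)/4) := Real.rpow_pos_of_pos ht0 _
  -- log t ≤ 4 t^{1/4}
  have hlog4 : Real.log t ≤ 4 * t ^ ((1:ℝ)/4) := by
    have h1 : Real.log (t ^ ((1:ℝ)/4)) ≤ t ^ ((1:ℝ)/4) - 1 :=
      Real.log_le_sub_one_of_pos hq
    rw [Real.log_rpow ht0] at h1
    linarith
  -- β * t^{3/4} ≤ 6
  have hβt : β * t ^ ((3:ℝ)/4) ≤ 6 := by
    have hmul : t ^ ((1:ℝ)/4) * t ^ ((3:ℝ)/4) = t := by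
      rw [← Real.rpow_add ht0]; norm_num
    rw [hβ, div_mul_eq_mul_div, div_le_iff₀ (by positivity)]
    nlinarith [mul_le_mul_of_nonneg_right hlog4 hq3.le]
  -- basic rpow values
  have ht32 : (0:ℝ) < t ^ (-(3:ℝ)/2) := Real.rpow_pos_of_pos ht0 _
  have ht3 : (0:ℝ) < t ^ (-(3:ℝ)) := Real.rpow_pos_of_pos ht0 _
  have ht32sq : t ^ (-(3:ℝ)/2) * t ^ (-(3:ℝ)/2) = t ^ (-(3:ℝ)) := by
    rw [← Real.rpow_add ht0]; norm_num
  -- the comparison function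
  set g : ℝ → ℝ := fun s =>
    t ^ (-(3:ℝ)) * (8 * s ^ (-(3:ℝ)/2) + 4 * (t - s) ^ (-(3:ℝ)) + 24 * (t - s) ^ (-(2:ℝ)))
    with hg
  -- pointwise bound on [1, t-1]
  have hpt : ∀ s ∈ Set.Icc (1:ℝ) (t-1),
      Real.exp (-β * s) * s ^ (-(3:ℝ)/2) * (t - s) ^ (-(3:ℝ)) ≤ g s := by
    rintro s ⟨hs1, hs2⟩
    have hs0 : (0:ℝ) < s := by linarith
    have hu0 : (0:ℝ) < t - s := by linarith
    have hs32 : (0:ℝ) ≤ s ^ (-(3:ℝ)/2) := (Real.rpow_pos_of_pos hs0 _).le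
    have hu3 : (0:ℝ) ≤ (t - s) ^ (-(3:ℝ)) := (Real.rpow_pos_of_pos hu0 _).le
    have hu2 : (0:ℝ) ≤ (t - s) ^ (-(2:ℝ)) := (Real.rpow_pos_of_pos hu0 _).le
    rcases le_or_gt s (t/2) with hcase | hcase
    · -- left part : (t-s) ≥ t/2
      have hexp : Real.exp (-β * s) ≤ 1 := by
        rw [← Real.exp_zero]
        exact Real.exp_le_exp.mpr (by nlinarith)
      have hbig : (t - s) ^ (-(3:ℝ)) ≤ 8 * t ^ (-(3:ℝ)) := by
        have h1 : (t - s) ^ (-(3:ℝ)) ≤ (t/2) ^ (-(3:ℝ)) :=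
          Real.rpow_le_rpow_of_nonpos (by linarith) (by linarith) (by norm_num)
        have h2 : (t/2) ^ (-(3:ℝ)) = 8 * t ^ (-(3:ℝ)) := by
          rw [Real.div_rpow ht0.le (by norm_num),
            show (2:ℝ) ^ (-(3:ℝ)) = 1/8 by
              rw [show (-(3:ℝ)) = ((-3 : ℤ) : ℝ) by norm_num, Real.rpow_intCast]; norm_num]
          ring
        linarith
      have : Real.exp (-β * s) * s ^ (-(3:ℝ)/2) * (t - s) ^ (-(3:ℝ))
          ≤ 1 * s ^ (-(3:ℝ)/2) * (8 * t ^ (-(3:ℝ))) := by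
        apply mul_le_mul _ hbig hu3 (by positivity)
        exact mul_le_mul_of_nonneg_right hexp hs32
      rw [hg]; dsimp only
      nlinarith [mul_nonneg ht3.le hu3, mul_nonneg ht3.le hu2]
    · -- right part : s ≥ t/2
      set u : ℝ := t - s with hu
      have hu1 : (1:ℝ) ≤ u := by simp only [hu]; linarith
      have hut : u ≤ t/2 := by simp only [hu]; linarith
      have hupos : (0:ℝ) < u := by linarith
      -- s^{-3/2} ≤ 4 t^{-3/2}
      have hsle : s ^ (-(3:ℝ)/2) ≤ 4 * t ^ (-(3:ℝ)/2) := by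
        have h1 : s ^ (-(3:ℝ)/2) ≤ (t/2) ^ (-(3:ℝ)/2) :=
          Real.rpow_le_rpow_of_nonpos (by linarith) hcase.le (by norm_num)
        have h2 : (t/2) ^ (-(3:ℝ)/2) = 2 ^ ((3:ℝ)/2) * t ^ (-(3:ℝ)/2) := by
          rw [Real.div_rpow ht0.le (by norm_num), div_eq_mul_inv, ← Real.rpow_neg (by norm_num)]
          ring_nf
        have h3 : (2:ℝ) ^ ((3:ℝ)/2) ≤ 4 := by
          calc (2:ℝ) ^ ((3:ℝ)/2) ≤ 2 ^ (2:ℝ) :=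
                Real.rpow_le_rpow_of_exponent_le (by norm_num) (by norm_num)
            _ = 4 := by
                rw [show (2:ℝ) = ((2:ℕ):ℝ) by norm_num, Real.rpow_natCast]; norm_num
        nlinarith
      -- exp(-β s) = t^{-3/2} * exp(β u)
      have hexp_split : Real.exp (-β * s) = t ^ (-(3:ℝ)/2) * Real.exp (β * u) := by
        have h1 : Real.exp (-β * s) = Real.exp (-β * t) * Real.exp (β * u) := by
          rw [← Real.exp_add]; congr 1; simp only [hu]; ring
        have h2 : Real.exp (-β * t) = t ^ (-(3:ℝ)/2) := by
          rw [Real.rpow_def_of_pos ht0]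
          congr 1
          rw [hβ]; field_simp
        rw [h1, h2]
      -- exp(β u) ≤ 1 + 6 u
      have hexp_u : Real.exp (β * u) ≤ 1 + 6 * u := by
        have hx0 : 0 ≤ β * u := mul_nonneg hβ0 (by linarith)
        have he34 : Real.exp (β * u) ≤ t ^ ((3:ℝ)/4) := by
          have h1 : β * u ≤ Real.log t * (3/4) := by
            have : β * u ≤ β * (t/2) := mul_le_mul_of_nonneg_left hut hβ0
            rw [hβ] at this ⊢
            have h2t : (2:ℝ) * t ≠ 0 := by positivity
            calc 3 * Real.log t / (2*t) * u ≤ 3 * Real.log t / (2*t) * (t/2) := this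
              _ = Real.log t * (3/4) := by
                  field_simp
                  ring
          calc Real.exp (β * u) ≤ Real.exp (Real.log t * (3/4)) := Real.exp_le_exp.mpr h1
            _ = t ^ ((3:ℝ)/4) := by rw [Real.rpow_def_of_pos ht0]
        have hkey : Real.exp (β * u) ≤ 1 + (β * u) * Real.exp (β * u) := by
          have h1 := Real.add_one_le_exp (-(β * u))
          rw [Real.exp_neg] at h1
          have h2 : 0 < Real.exp (β * u) := Real.exp_pos _
          nlinarith [mul_le_mul_of_nonneg_right h1 h2.le, mul_inv_cancel₀ (ne_of_gt h2)]
        have h6 : (β * u) * Real.exp (β * u) ≤ 6 * u := by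
          calc (β * u) * Real.exp (β * u) ≤ (β * u) * t ^ ((3:ℝ)/4) :=
              mul_le_mul_of_nonneg_left he34 hx0
            _ = (β * t ^ ((3:ℝ)/4)) * u := by ring
            _ ≤ 6 * u := mul_le_mul_of_nonneg_right hβt (by linarith)
        linarith
      -- put together
      have huu : u * u ^ (-(3:ℝ)) = u ^ (-(2:ℝ)) := by
        rw [show (-(2:ℝ)) = 1 + -(3:ℝ) by norm_num, Real.rpow_add hupos, Real.rpow_one]
      have hu3' : (0:ℝ) < u ^ (-(3:ℝ)) := Real.rpow_pos_of_pos hupos _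
      have step : Real.exp (-β * s) * s ^ (-(3:ℝ)/2) * (t - s) ^ (-(3:ℝ))
          ≤ (t ^ (-(3:ℝ)/2) * (1 + 6 * u)) * (4 * t ^ (-(3:ℝ)/2)) * u ^ (-(3:ℝ)) := by
        apply mul_le_mul_of_nonneg_right _ hu3'.le
        rw [hexp_split]
        apply mul_le_mul _ hsle hs32 (by positivity)
        exact mul_le_mul_of_nonneg_left hexp_u ht32.le
      have heq : (t ^ (-(3:ℝ)/2) * (1 + 6 * u)) * (4 * t ^ (-(3:ℝ)/2)) * u ^ (-(3:ℝ))
          = t ^ (-(3:ℝ)) * (4 * u ^ (-(3:ℝ)) + 24 * u ^ (-(2:ℝ))) := by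
        rw [← huu, ← ht32sq]; ring
      rw [hg]; dsimp only
      have hfin : t ^ (-(3:ℝ)) * (4 * u ^ (-(3:ℝ)) + 24 * u ^ (-(2:ℝ)))
          ≤ t ^ (-(3:ℝ)) *
            (8 * s ^ (-(3:ℝ)/2) + 4 * (t - s) ^ (-(3:ℝ)) + 24 * (t - s) ^ (-(2:ℝ))) := by
        apply mul_le_mul_of_nonneg_left _ ht3.le
        simp only [← hu]
        nlinarith
      calc Real.exp (-β * s) * s ^ (-(3:ℝ)/2) * (t - s) ^ (-(3:ℝ))
          ≤ (t ^ (-(3:ℝ)/2) * (1 + 6 * u)) * (4 * t ^ (-(3:ℝ)/2)) * u ^ (-(3:ℝ)) := step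
        _ = t ^ (-(3:ℝ)) * (4 * u ^ (-(3:ℝ)) + 24 * u ^ (-(2:ℝ))) := heq
        _ ≤ _ := hfin
  -- integrability
  have hnot0 : ∀ s ∈ Set.uIcc (1:ℝ) (t-1), s ≠ 0 := by
    intro s hs
    rw [Set.uIcc_of_le h1t, Set.mem_Icc] at hs
    intro h; rw [h] at hs; linarith [hs.1]
  have hnotT : ∀ s ∈ Set.uIcc (1:ℝ) (t-1), t - s ≠ 0 := by
    intro s hs
    rw [Set.uIcc_of_le h1t, Set.mem_Icc] at hs
    intro h; have : s = t := by linarith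
    rw [this] at hs; linarith [hs.2]
  have hcont1 : ContinuousOn (fun s : ℝ => s ^ (-(3:ℝ)/2)) (Set.uIcc 1 (t-1)) :=
    ContinuousOn.rpow_const continuousOn_id (fun s hs => Or.inl (hnot0 s hs))
  have hcont2 : ContinuousOn (fun s : ℝ => (t - s) ^ (-(3:ℝ))) (Set.uIcc 1 (t-1)) :=
    ContinuousOn.rpow_const (continuousOn_const.sub continuousOn_id)
      (fun s hs => Or.inl (hnotT s hs))
  have hcont3 : ContinuousOn (fun s : ℝ => (t - s) ^ (-(2:ℝ))) (Set.uIcc 1 (t-1)) :=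
    ContinuousOn.rpow_const (continuousOn_const.sub continuousOn_id)
      (fun s hs => Or.inl (hnotT s hs))
  have hcontE : ContinuousOn (fun s : ℝ => Real.exp (-β * s)) (Set.uIcc 1 (t-1)) :=
    (Real.continuous_exp.comp (continuous_const.mul continuous_id)).continuousOn
  have hintf : IntervalIntegrable
      (fun s => Real.exp (-β * s) * s ^ (-(3:ℝ)/2) * (t - s) ^ (-(3:ℝ)))
      MeasureTheory.volume 1 (t-1) :=
    ((hcontE.mul hcont1).mul hcont2).intervalIntegrable
  have hintg : IntervalIntegrable g MeasureTheory.volume 1 (t-1) := by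
    apply ContinuousOn.intervalIntegrable
    apply ContinuousOn.mul continuousOn_const
    exact ((continuousOn_const.mul hcont1).add
      (continuousOn_const.mul hcont2)).add (continuousOn_const.mul hcont3)
  -- the main comparison
  have hmono : (∫ s in (1:ℝ)..(t-1),
        Real.exp (-β * s) * s ^ (-(3:ℝ)/2) * (t - s) ^ (-(3:ℝ)))
      ≤ ∫ s in (1:ℝ)..(t-1), g s :=
    intervalIntegral.integral_mono_on h1t hintf hintg hpt
  -- compute the integral of g
  have hI1 : (∫ s in (1:ℝ)..(t-1), s ^ (-(3:ℝ)/2)) ≤ 2 := by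
    rw [show (-(3:ℝ)/2) = (-(3:ℝ)/2) from rfl,
      integral_rpow (Or.inr ⟨by norm_num, by
        rw [Set.uIcc_of_le h1t, Set.mem_Icc]; push_neg; intro h; linarith⟩)]
    have h1 : (0:ℝ) ≤ (t-1) ^ (-(3:ℝ)/2 + 1) := Real.rpow_nonneg (by linarith) _
    rw [Real.one_rpow]
    rw [show (-(3:ℝ)/2 + 1) = -(1/2 : ℝ) by norm_num] at *
    have h2 : (0:ℝ) ≤ (t-1) ^ (-(1/2:ℝ)) := Real.rpow_nonneg (by linarith) _
    norm_num
    linarith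
  have hI2 : (∫ s in (1:ℝ)..(t-1), (t - s) ^ (-(3:ℝ))) ≤ 1/2 := by
    have hc := intervalIntegral.integral_comp_sub_left
      (a := (1:ℝ)) (b := t-1) (fun u : ℝ => u ^ (-(3:ℝ))) t
    rw [show t - (t-1) = 1 by ring, show t - 1 = t - 1 from rfl] at hc
    rw [hc, integral_rpow (Or.inr ⟨by norm_num, by
        rw [Set.uIcc_of_le h1t, Set.mem_Icc]; push_neg; intro h; linarith⟩)]
    rw [Real.one_rpow]
    have h2 : (0:ℝ) ≤ (t-1) ^ (-(3:ℝ) + 1) := Real.rpow_nonneg (by linarith) _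
    rw [show (-(3:ℝ) + 1) = (-2 : ℝ) by norm_num] at *
    norm_num
    have h2' : (0:ℝ) ≤ ((t-1)^2)⁻¹ := by positivity
    linarith
  have hI3 : (∫ s in (1:ℝ)..(t-1), (t - s) ^ (-(2:ℝ))) ≤ 1 := by
    have hc := intervalIntegral.integral_comp_sub_left
      (a := (1:ℝ)) (b := t-1) (fun u : ℝ => u ^ (-(2:ℝ))) t
    rw [show t - (t-1) = 1 by ring] at hc
    rw [hc, integral_rpow (Or.inr ⟨by norm_num, by
        rw [Set.uIcc_of_le h1t, Set.mem_Icc]; push_neg; intro h; linarith⟩)]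
    rw [Real.one_rpow]
    have h2 : (0:ℝ) ≤ (t-1) ^ (-(2:ℝ) + 1) := Real.rpow_nonneg (by linarith) _
    rw [show (-(2:ℝ) + 1) = (-1 : ℝ) by norm_num] at *
    norm_num
    linarith
  have hgval : (∫ s in (1:ℝ)..(t-1), g s) ≤ 42 * t ^ (-(3:ℝ)) := by
    have hsplit : (∫ s in (1:ℝ)..(t-1), g s)
        = t ^ (-(3:ℝ)) * ((8 * ∫ s in (1:ℝ)..(t-1), s ^ (-(3:ℝ)/2))
          + (4 * ∫ s in (1:ℝ)..(t-1), (t - s) ^ (-(3:ℝ)))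
          + (24 * ∫ s in (1:ℝ)..(t-1), (t - s) ^ (-(2:ℝ)))) := by
      rw [hg]
      rw [intervalIntegral.integral_const_mul]
      congr 1
      rw [intervalIntegral.integral_add
          (f := fun x => 8 * x ^ (-(3:ℝ)/2) + 4 * (t - x) ^ (-(3:ℝ)))
          (g := fun x => 24 * (t - x) ^ (-(2:ℝ)))
          (((continuousOn_const.mul hcont1).add
            (continuousOn_const.mul hcont2)).intervalIntegrable)
          ((continuousOn_const.mul hcont3).intervalIntegrable),
        intervalIntegral.integral_add
          (f := fun x => 8 * x ^ (-(3:ℝ)/2)) (g := fun x => 4 * (t - x) ^ (-(3:ℝ)))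
          ((continuousOn_const.mul hcont1).intervalIntegrable)
          ((continuousOn_const.mul hcont2).intervalIntegrable),
        intervalIntegral.integral_const_mul, intervalIntegral.integral_const_mul,
        intervalIntegral.integral_const_mul]
    rw [hsplit]
    have hsum : (8 * ∫ s in (1:ℝ)..(t-1), s ^ (-(3:ℝ)/2))
          + (4 * ∫ s in (1:ℝ)..(t-1), (t - s) ^ (-(3:ℝ)))
          + (24 * ∫ s in (1:ℝ)..(t-1), (t - s) ^ (-(2:ℝ))) ≤ 42 := by
      linarith
    calc t ^ (-(3:ℝ)) * _ ≤ t ^ (-(3:ℝ)) * 42 :=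
          mul_le_mul_of_nonneg_left hsum ht3.le
      _ = 42 * t ^ (-(3:ℝ)) := by ring
  calc (∫ s in (1:ℝ)..(t-1),
        Real.exp (-(3 * Real.log t / (2 * t)) * s) * s ^ (-(3:ℝ)/2) * (t - s) ^ (-(3:ℝ)))
      ≤ ∫ s in (1:ℝ)..(t-1), g s := hmono
    _ ≤ 42 * t ^ (-(3:ℝ)) := hgval
end

section
/- There exists a constant C > 0 such that for all real s, t with e ≤ s ≤ t ≤ 2s, ∫_{1}^{s−1} e^{−(log t/(2t))·r} · r^{−3/2} · (s−r)^{−3/2} · (t−r)^{−3/2} dr ≤ C·e^{−(log t/(2t))·s}·(t^{−5/2} + t^{−3/2}·(t−s+1)^{−3/2}). -/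
open Real

open Set MeasureTheory

lemma exp_mul_le_aux (t u : ℝ) (ht : Real.exp 1 ≤ t) (hu1 : 1 ≤ u) (hu2 : u ≤ t / 2) :
    Real.exp (Real.log t / (2 * t) * u) ≤ Real.exp 1 * u ^ ((1:ℝ)/4) := by
  have htpos : (0:ℝ) < t := lt_of_lt_of_le (Real.exp_pos 1) ht
  have ht2 : (2:ℝ) ≤ t := le_trans (by have := Real.add_one_le_exp 1; linarith) ht
  have hlog : 0 ≤ Real.log t := Real.log_nonneg (by linarith)
  set L := Real.log t / (2 * t) with hLdef
  have hL0 : 0 ≤ L := by positivity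
  have hconv : ConvexOn ℝ (Set.Ioi (0:ℝ)) (fun x => L * x + (1/4) * (-Real.log x)) := by
    apply ConvexOn.add
    · simpa using (convexOn_id (convex_Ioi (0:ℝ))).smul hL0
    · exact strictConcaveOn_log_Ioi.concaveOn.neg.smul (by norm_num)
  have hmem : u ∈ segment ℝ (1:ℝ) (t/2) := by
    rw [segment_eq_Icc (by linarith : (1:ℝ) ≤ t/2)]
    exact ⟨hu1, hu2⟩
  have h1 : (1:ℝ) ∈ Set.Ioi (0:ℝ) := by norm_num
  have h2 : t/2 ∈ Set.Ioi (0:ℝ) := by simp; linarith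
  have hmax := hconv.le_on_segment h1 h2 hmem
  have hg1 : L * 1 + (1/4) * (-Real.log 1) ≤ 1 := by
    have : Real.log t ≤ t - 1 := Real.log_le_sub_one_of_pos htpos
    rw [Real.log_one]
    have : L ≤ 1 := by
      rw [hLdef, div_le_one (by linarith)]
      linarith
    linarith
  have hg2 : L * (t/2) + (1/4) * (-Real.log (t/2)) ≤ 1 := by
    have hld : Real.log (t/2) = Real.log t - Real.log 2 := Real.log_div (ne_of_gt htpos) two_ne_zero
    have hLt : L * (t/2) = Real.log t / 4 := by
      rw [hLdef]; field_simp; ring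
    have hl2 : Real.log 2 ≤ 1 := by
      have := Real.log_le_sub_one_of_pos (by norm_num : (0:ℝ) < 2)
      linarith
    rw [hld, hLt]; linarith
  have hkey : L * u ≤ 1 + (1/4) * Real.log u := by
    have := le_trans hmax (max_le hg1 hg2)
    linarith
  calc Real.exp (L * u) ≤ Real.exp (1 + (1/4) * Real.log u) := Real.exp_le_exp.mpr hkey
    _ = Real.exp 1 * u ^ ((1:ℝ)/4) := by
        rw [Real.exp_add, Real.rpow_def_of_pos (by linarith : (0:ℝ) < u)]
        ring_nf

lemma four_rpow : ((4:ℝ)) ^ ((3:ℝ)/2) = 8 := by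
  have h4 : (4:ℝ) = (2:ℝ) ^ (2:ℝ) := by
    rw [show (2:ℝ) = ((2:ℕ):ℝ) by norm_num, Real.rpow_natCast]; norm_num
  rw [h4, ← Real.rpow_mul (by norm_num : (0:ℝ) ≤ 2)]
  norm_num

lemma two_rpow_le : ((2:ℝ)) ^ ((3:ℝ)/2) ≤ 3 := by
  have h8 : ((2:ℝ)) ^ ((3:ℝ)/2) = ((8:ℝ)) ^ ((1:ℝ)/2) := by
    rw [show (8:ℝ) = (2:ℝ) ^ (3:ℝ) by
        rw [show (3:ℝ) = ((3:ℕ):ℝ) by norm_num, Real.rpow_natCast]; norm_num,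
      ← Real.rpow_mul (by norm_num : (0:ℝ) ≤ 2)]
    norm_num
  have h9 : ((9:ℝ)) ^ ((1:ℝ)/2) = 3 := by
    rw [show (9:ℝ) = (3:ℝ) ^ (2:ℝ) by
        rw [show (2:ℝ) = ((2:ℕ):ℝ) by norm_num, Real.rpow_natCast]; norm_num,
      ← Real.rpow_mul (by norm_num : (0:ℝ) ≤ 3)]
    norm_num
  rw [h8, ← h9]
  exact Real.rpow_le_rpow (by norm_num) (by norm_num) (by norm_num)

set_option maxHeartbeats 2000000 in
/-- The main integral estimate in Lemma 2.3 of the paper: there is `C > 0` such that for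
`e ≤ s ≤ t ≤ 2s`,
`∫_1^{s−1} e^{−(log t/2t)r} r^{−3/2}(s−r)^{−3/2}(t−r)^{−3/2} dr
  ≤ C·e^{−(log t/2t)s}(t^{−5/2} + t^{−3/2}(t−s+1)^{−3/2})`. -/
theorem integral_estimate_lem23 :
    ∃ C > (0:ℝ), ∀ s t : ℝ, Real.exp 1 ≤ s → s ≤ t → t ≤ 2 * s →
      ∫ r in (1:ℝ)..(s - 1),
          Real.exp (-(Real.log t / (2 * t)) * r) * r ^ (-(3:ℝ)/2)
            * (s - r) ^ (-(3:ℝ)/2) * (t - r) ^ (-(3:ℝ)/2)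
        ≤ C * Real.exp (-(Real.log t / (2 * t)) * s)
            * (t ^ (-(5:ℝ)/2) + t ^ (-(3:ℝ)/2) * (t - s + 1) ^ (-(3:ℝ)/2)) := by
  refine ⟨100, by norm_num, ?_⟩
  intro s t hes hst hts
  have he2 : (2:ℝ) ≤ Real.exp 1 := by have := Real.add_one_le_exp 1; linarith
  have hs2 : (2:ℝ) ≤ s := le_trans he2 hes
  have ht2 : (2:ℝ) ≤ t := le_trans hs2 hst
  have htpos : (0:ℝ) < t := by linarith
  have hspos : (0:ℝ) < s := by linarith
  have het : Real.exp 1 ≤ t := le_trans hes hst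
  have hhalf1 : (1:ℝ) ≤ s/2 := by linarith
  have hhalf2 : s/2 ≤ s - 1 := by linarith
  have h1s1 : (1:ℝ) ≤ s - 1 := by linarith
  have hts2 : t/2 ≤ s := by linarith
  have hlogt : 0 ≤ Real.log t := Real.log_nonneg (by linarith)
  set L := Real.log t / (2 * t) with hLdef
  have hL0 : 0 ≤ L := by positivity
  set f : ℝ → ℝ := fun r => Real.exp (-L * r) * r ^ (-(3:ℝ)/2)
      * (s - r) ^ (-(3:ℝ)/2) * (t - r) ^ (-(3:ℝ)/2) with hfdef
  -- continuity / integrability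
  have hcont : ContinuousOn f (Icc 1 (s-1)) := by
    apply ContinuousOn.mul
    apply ContinuousOn.mul
    apply ContinuousOn.mul
    · exact (Real.continuous_exp.comp (continuous_const.mul continuous_id)).continuousOn
    · exact continuousOn_id.rpow_const (fun x hx => Or.inl (by
        have := hx.1; intro h; rw [id] at h; linarith))
    · exact (continuousOn_const.sub continuousOn_id).rpow_const (fun x hx => Or.inl (by
        have := hx.2; intro h; simp only [Pi.sub_apply, id] at h; linarith))
    · exact (continuousOn_const.sub continuousOn_id).rpow_const (fun x hx => Or.inl (by
        have := hx.2; intro h; simp only [Pi.sub_apply, id] at h; linarith))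
  have hint : ∀ a b : ℝ, 1 ≤ a → b ≤ s - 1 → a ≤ b → IntervalIntegrable f volume a b := by
    intro a b ha hb hab
    exact ((hcont.mono (by rw [uIcc_of_le hab]; exact Icc_subset_Icc ha hb))).intervalIntegrable
  have hint1 : IntervalIntegrable f volume 1 (s/2) := hint 1 (s/2) le_rfl hhalf2 hhalf1
  have hint2 : IntervalIntegrable f volume (s/2) (s-1) := hint (s/2) (s-1) hhalf1 le_rfl hhalf2
  have hsplit : ∫ r in (1:ℝ)..(s-1), f r
      = (∫ r in (1:ℝ)..(s/2), f r) + ∫ r in (s/2)..(s-1), f r :=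
    (intervalIntegral.integral_add_adjacent_intervals hint1 hint2).symm
  -- rpow numerics
  have hq4 : (t/4) ^ (-(3:ℝ)/2) = 8 * t ^ (-(3:ℝ)/2) := by
    rw [Real.div_rpow (by linarith) (by norm_num), show -(3:ℝ)/2 = -((3:ℝ)/2) by ring,
      Real.rpow_neg (by norm_num : (0:ℝ) ≤ 4), four_rpow]
    rw [Real.rpow_neg htpos.le]
    field_simp
  have hq2 : (t/2) ^ (-(3:ℝ)/2) ≤ 3 * t ^ (-(3:ℝ)/2) := by
    rw [Real.div_rpow htpos.le (by norm_num), div_eq_mul_inv,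
      show -(3:ℝ)/2 = -((3:ℝ)/2) by ring, Real.rpow_neg (by norm_num : (0:ℝ) ≤ 2), inv_inv]
    have ht0 : 0 ≤ t ^ (-((3:ℝ)/2)) := Real.rpow_nonneg htpos.le _
    calc t ^ (-((3:ℝ)/2)) * 2 ^ ((3:ℝ)/2) ≤ t ^ (-((3:ℝ)/2)) * 3 :=
          mul_le_mul_of_nonneg_left two_rpow_le ht0
      _ = 3 * t ^ (-((3:ℝ)/2)) := by ring
  have hexpLs : t ^ (-(1:ℝ)/2) ≤ Real.exp (-L * s) := by
    rw [Real.rpow_def_of_pos htpos]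
    apply Real.exp_le_exp.mpr
    have key : Real.log t * s ≤ Real.log t * t := mul_le_mul_of_nonneg_left hst hlogt
    rw [hLdef, show Real.log t * (-(1:ℝ)/2) = -(Real.log t / 2) by ring,
      show -(Real.log t / (2*t)) * s = -(Real.log t * s / (2*t)) by ring, neg_le_neg_iff,
      div_le_div_iff₀ (by linarith) (by norm_num)]
    linarith [key]
  -- Part I : bound on [1, s/2]
  have hIone : (∫ r in (1:ℝ)..(s/2), f r)
      ≤ ((t/4) ^ (-(3:ℝ)/2) * (t/2) ^ (-(3:ℝ)/2)) * 2 := by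
    set c1 := (t/4) ^ (-(3:ℝ)/2) * (t/2) ^ (-(3:ℝ)/2) with hc1
    have hc1n : 0 ≤ c1 :=
      mul_nonneg (Real.rpow_nonneg (by linarith) _) (Real.rpow_nonneg (by linarith) _)
    have h0 : (0:ℝ) ∉ uIcc (1:ℝ) (s/2) := by
      rw [uIcc_of_le hhalf1]; intro h; have := h.1; norm_num at this
    have hgint : IntervalIntegrable (fun r : ℝ => c1 * r ^ (-(3:ℝ)/2)) volume 1 (s/2) :=
      (intervalIntegral.intervalIntegrable_rpow (Or.inr h0)).const_mul c1
    have hle : ∀ x ∈ Icc (1:ℝ) (s/2), f x ≤ c1 * x ^ (-(3:ℝ)/2) := by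
      rintro x ⟨hx1, hx2⟩
      have hxpos : (0:ℝ) < x := by linarith
      have h1 : (s - x) ^ (-(3:ℝ)/2) ≤ (t/4) ^ (-(3:ℝ)/2) :=
        Real.rpow_le_rpow_of_nonpos (by linarith) (by linarith) (by norm_num)
      have h2 : (t - x) ^ (-(3:ℝ)/2) ≤ (t/2) ^ (-(3:ℝ)/2) :=
        Real.rpow_le_rpow_of_nonpos (by linarith) (by linarith) (by norm_num)
      have hexp1 : Real.exp (-L * x) ≤ 1 := Real.exp_le_one_iff.mpr (by nlinarith)
      have hxn : (0:ℝ) ≤ x ^ (-(3:ℝ)/2) := Real.rpow_nonneg hxpos.le _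
      have hsxn : (0:ℝ) ≤ (s - x) ^ (-(3:ℝ)/2) := Real.rpow_nonneg (by linarith) _
      have htxn : (0:ℝ) ≤ (t - x) ^ (-(3:ℝ)/2) := Real.rpow_nonneg (by linarith) _
      have ht4n : (0:ℝ) ≤ (t/4) ^ (-(3:ℝ)/2) := Real.rpow_nonneg (by linarith) _
      have ht2n : (0:ℝ) ≤ (t/2) ^ (-(3:ℝ)/2) := Real.rpow_nonneg (by linarith) _
      have step1 : Real.exp (-L*x) * x ^ (-(3:ℝ)/2) ≤ 1 * x ^ (-(3:ℝ)/2) :=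
        mul_le_mul_of_nonneg_right hexp1 hxn
      have step2 : Real.exp (-L*x) * x ^ (-(3:ℝ)/2) * (s-x) ^ (-(3:ℝ)/2)
          ≤ (1 * x ^ (-(3:ℝ)/2)) * (t/4) ^ (-(3:ℝ)/2) :=
        mul_le_mul step1 h1 hsxn (mul_nonneg zero_le_one hxn)
      have step3 : Real.exp (-L*x) * x ^ (-(3:ℝ)/2) * (s-x) ^ (-(3:ℝ)/2) * (t-x) ^ (-(3:ℝ)/2)
          ≤ ((1 * x ^ (-(3:ℝ)/2)) * (t/4) ^ (-(3:ℝ)/2)) * (t/2) ^ (-(3:ℝ)/2) :=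
        mul_le_mul step2 h2 htxn (mul_nonneg (mul_nonneg zero_le_one hxn) ht4n)
      calc f x ≤ ((1 * x ^ (-(3:ℝ)/2)) * (t/4) ^ (-(3:ℝ)/2)) * (t/2) ^ (-(3:ℝ)/2) := step3
        _ = c1 * x ^ (-(3:ℝ)/2) := by rw [hc1]; ring
    calc (∫ r in (1:ℝ)..(s/2), f r) ≤ ∫ r in (1:ℝ)..(s/2), c1 * r ^ (-(3:ℝ)/2) :=
        intervalIntegral.integral_mono_on hhalf1 hint1 hgint hle
      _ = c1 * ∫ r in (1:ℝ)..(s/2), r ^ (-(3:ℝ)/2) := intervalIntegral.integral_const_mul c1 _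
      _ ≤ c1 * 2 := by
          apply mul_le_mul_of_nonneg_left _ hc1n
          rw [_root_.integral_rpow (Or.inr ⟨by norm_num, h0⟩), Real.one_rpow,
            show (-(3:ℝ)/2 + 1) = -(1/2) by norm_num]
          have hnn : (0:ℝ) ≤ (s/2) ^ (-(1/2):ℝ) := Real.rpow_nonneg (by linarith) _
          linarith
  -- Part II : bound on [s/2, s-1]
  have hItwo : (∫ r in (s/2)..(s-1), f r)
      ≤ (8 * Real.exp 1 * Real.exp (-L*s) * t ^ (-(3:ℝ)/2) * (t-s+1) ^ (-(3:ℝ)/2)) * 4 := by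
    set c2 := 8 * Real.exp 1 * Real.exp (-L*s) * t ^ (-(3:ℝ)/2) * (t-s+1) ^ (-(3:ℝ)/2) with hc2
    have hc2n : 0 ≤ c2 := by
      apply mul_nonneg
      apply mul_nonneg
      apply mul_nonneg
      apply mul_nonneg
      · norm_num
      · exact (Real.exp_pos 1).le
      · exact (Real.exp_pos _).le
      · exact Real.rpow_nonneg htpos.le _
      · exact Real.rpow_nonneg (by linarith) _
    have hgcont : ContinuousOn (fun r : ℝ => c2 * (s - r) ^ (-(5:ℝ)/4)) (uIcc (s/2) (s-1)) := by
      rw [uIcc_of_le hhalf2]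
      apply ContinuousOn.mul continuousOn_const
      apply (continuousOn_const.sub continuousOn_id).rpow_const
      rintro x ⟨hx1, hx2⟩
      left
      simp only [Pi.sub_apply, id]
      intro h; linarith
    have hgint : IntervalIntegrable (fun r : ℝ => c2 * (s - r) ^ (-(5:ℝ)/4)) volume (s/2) (s-1) :=
      hgcont.intervalIntegrable
    have hle : ∀ x ∈ Icc (s/2) (s-1), f x ≤ c2 * (s - x) ^ (-(5:ℝ)/4) := by
      rintro x ⟨hx1, hx2⟩
      have hxpos : (0:ℝ) < x := by linarith
      have hsx1 : (1:ℝ) ≤ s - x := by linarith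
      have hsxpos : (0:ℝ) < s - x := by linarith
      have hsx2 : s - x ≤ t/2 := by linarith
      have hexps : Real.exp (-L * x) = Real.exp (-L*s) * Real.exp (L*(s-x)) := by
        rw [← Real.exp_add]; ring_nf
      have hkey : Real.exp (L*(s-x)) ≤ Real.exp 1 * (s-x) ^ ((1:ℝ)/4) :=
        exp_mul_le_aux t (s-x) het hsx1 hsx2
      have hr : x ^ (-(3:ℝ)/2) ≤ (t/4) ^ (-(3:ℝ)/2) :=
        Real.rpow_le_rpow_of_nonpos (by linarith) (by linarith) (by norm_num)
      have htx : (t - x) ^ (-(3:ℝ)/2) ≤ (t-s+1) ^ (-(3:ℝ)/2) :=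
        Real.rpow_le_rpow_of_nonpos (by linarith) (by linarith) (by norm_num)
      have hE : (0:ℝ) ≤ Real.exp (-L*s) := (Real.exp_pos _).le
      have hxn : (0:ℝ) ≤ x ^ (-(3:ℝ)/2) := Real.rpow_nonneg hxpos.le _
      have ht4n : (0:ℝ) ≤ (t/4) ^ (-(3:ℝ)/2) := Real.rpow_nonneg (by linarith) _
      have hsxn : (0:ℝ) ≤ (s-x) ^ (-(3:ℝ)/2) := Real.rpow_nonneg hsxpos.le _
      have htxn : (0:ℝ) ≤ (t-x) ^ (-(3:ℝ)/2) := Real.rpow_nonneg (by linarith) _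
      have hq14 : (0:ℝ) ≤ Real.exp 1 * (s-x) ^ ((1:ℝ)/4) :=
        mul_nonneg (Real.exp_pos 1).le (Real.rpow_nonneg hsxpos.le _)
      have m1 : Real.exp (-L*s) * Real.exp (L*(s-x)) * x ^ (-(3:ℝ)/2)
          ≤ Real.exp (-L*s) * (Real.exp 1 * (s-x) ^ ((1:ℝ)/4)) * (t/4) ^ (-(3:ℝ)/2) :=
        mul_le_mul (mul_le_mul_of_nonneg_left hkey hE) hr hxn
          (mul_nonneg hE hq14)
      have m2 : Real.exp (-L*s) * Real.exp (L*(s-x)) * x ^ (-(3:ℝ)/2) * (s-x) ^ (-(3:ℝ)/2)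
          ≤ Real.exp (-L*s) * (Real.exp 1 * (s-x) ^ ((1:ℝ)/4)) * (t/4) ^ (-(3:ℝ)/2)
            * (s-x) ^ (-(3:ℝ)/2) :=
        mul_le_mul_of_nonneg_right m1 hsxn
      have m3 : Real.exp (-L*s) * Real.exp (L*(s-x)) * x ^ (-(3:ℝ)/2) * (s-x) ^ (-(3:ℝ)/2)
            * (t-x) ^ (-(3:ℝ)/2)
          ≤ Real.exp (-L*s) * (Real.exp 1 * (s-x) ^ ((1:ℝ)/4)) * (t/4) ^ (-(3:ℝ)/2)
            * (s-x) ^ (-(3:ℝ)/2) * (t-s+1) ^ (-(3:ℝ)/2) :=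
        mul_le_mul m2 htx htxn
          (mul_nonneg (mul_nonneg (mul_nonneg hE hq14) ht4n) hsxn)
      have hcomb : (s-x) ^ ((1:ℝ)/4) * (s-x) ^ (-(3:ℝ)/2) = (s-x) ^ (-(5:ℝ)/4) := by
        rw [← Real.rpow_add hsxpos]; norm_num
      calc f x = Real.exp (-L*s) * Real.exp (L*(s-x)) * x ^ (-(3:ℝ)/2) * (s-x) ^ (-(3:ℝ)/2)
            * (t-x) ^ (-(3:ℝ)/2) := by
            show Real.exp (-L * x) * x ^ (-(3:ℝ)/2) * (s - x) ^ (-(3:ℝ)/2)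
                * (t - x) ^ (-(3:ℝ)/2) = _
            rw [hexps]
        _ ≤ Real.exp (-L*s) * (Real.exp 1 * (s-x) ^ ((1:ℝ)/4)) * (t/4) ^ (-(3:ℝ)/2)
            * (s-x) ^ (-(3:ℝ)/2) * (t-s+1) ^ (-(3:ℝ)/2) := m3
        _ = (Real.exp (-L*s) * Real.exp 1 * (t/4) ^ (-(3:ℝ)/2) * (t-s+1) ^ (-(3:ℝ)/2))
            * ((s-x) ^ ((1:ℝ)/4) * (s-x) ^ (-(3:ℝ)/2)) := by ring
        _ = c2 * (s - x) ^ (-(5:ℝ)/4) := by rw [hcomb, hq4, hc2]; ring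
    have hsub : (∫ r in (s/2)..(s-1), (s - r) ^ (-(5:ℝ)/4))
        = ∫ u in (1:ℝ)..(s/2), u ^ (-(5:ℝ)/4) := by
      rw [intervalIntegral.integral_comp_sub_left (fun u : ℝ => u ^ (-(5:ℝ)/4)) s,
        show s - (s-1) = 1 by ring, show s - s/2 = s/2 by ring]
    have h0 : (0:ℝ) ∉ uIcc (1:ℝ) (s/2) := by
      rw [uIcc_of_le hhalf1]; intro h; have := h.1; norm_num at this
    calc (∫ r in (s/2)..(s-1), f r) ≤ ∫ r in (s/2)..(s-1), c2 * (s - r) ^ (-(5:ℝ)/4) :=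
        intervalIntegral.integral_mono_on hhalf2 hint2 hgint hle
      _ = c2 * ∫ r in (s/2)..(s-1), (s - r) ^ (-(5:ℝ)/4) :=
        intervalIntegral.integral_const_mul c2 _
      _ ≤ c2 * 4 := by
          apply mul_le_mul_of_nonneg_left _ hc2n
          rw [hsub, _root_.integral_rpow (Or.inr ⟨by norm_num, h0⟩), Real.one_rpow,
            show (-(5:ℝ)/4 + 1) = -(1/4) by norm_num]
          have hnn : (0:ℝ) ≤ (s/2) ^ (-(1/4):ℝ) := Real.rpow_nonneg (by linarith) _
          linarith
  -- Assemble
  have h33 : t ^ (-(3:ℝ)/2) * t ^ (-(3:ℝ)/2) = t ^ (-(1:ℝ)/2) * t ^ (-(5:ℝ)/2) := by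
    rw [← Real.rpow_add htpos, ← Real.rpow_add htpos]; norm_num
  have ht3n : (0:ℝ) ≤ t ^ (-(3:ℝ)/2) := Real.rpow_nonneg htpos.le _
  have ht5n : (0:ℝ) ≤ t ^ (-(5:ℝ)/2) := Real.rpow_nonneg htpos.le _
  have hXn : (0:ℝ) ≤ (t-s+1) ^ (-(3:ℝ)/2) := Real.rpow_nonneg (by linarith) _
  have hE : (0:ℝ) ≤ Real.exp (-L*s) := (Real.exp_pos _).le
  have hApart : ((t/4) ^ (-(3:ℝ)/2) * (t/2) ^ (-(3:ℝ)/2)) * 2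
      ≤ 48 * (Real.exp (-L*s) * t ^ (-(5:ℝ)/2)) := by
    calc ((t/4) ^ (-(3:ℝ)/2) * (t/2) ^ (-(3:ℝ)/2)) * 2
        = (16 * t ^ (-(3:ℝ)/2)) * (t/2) ^ (-(3:ℝ)/2) := by rw [hq4]; ring
      _ ≤ (16 * t ^ (-(3:ℝ)/2)) * (3 * t ^ (-(3:ℝ)/2)) :=
          mul_le_mul_of_nonneg_left hq2 (by positivity)
      _ = 48 * (t ^ (-(3:ℝ)/2) * t ^ (-(3:ℝ)/2)) := by ring
      _ = 48 * (t ^ (-(1:ℝ)/2) * t ^ (-(5:ℝ)/2)) := by rw [h33]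
      _ ≤ 48 * (Real.exp (-L*s) * t ^ (-(5:ℝ)/2)) := by
          apply mul_le_mul_of_nonneg_left _ (by norm_num)
          exact mul_le_mul_of_nonneg_right hexpLs ht5n
  have hIa : Real.exp 1 ≤ 2.7182818286 := le_of_lt Real.exp_one_lt_d9
  rw [hsplit]
  have hfin1 := le_trans hIone hApart
  have hfin2 := hItwo
  nlinarith [mul_nonneg hE ht5n, mul_nonneg hE (mul_nonneg ht3n hXn), hIa,
    mul_nonneg (mul_nonneg hE ht3n) hXn, (Real.exp_pos 1).le]
end

section
/- There exists a constant c > 0 such that for all real s, t with e ≤ s ≤ t ≤ 2s, ∫_{1}^{s/2} e^{−(log t/(2t))·r} · r^{−3/2} · (s−r)^{−3/2} · (t−r)^{−3/2} dr ≤ c·s^{−3/2}·t^{−3/2}. -/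
open Real

/-- Small-`r` case in the proof of Lemma 2.3 of the paper: there is `c > 0` such that for
`e ≤ s ≤ t ≤ 2s`,
`∫_1^{s/2} e^{−(log t/2t)r} r^{−3/2}(s−r)^{−3/2}(t−r)^{−3/2} dr ≤ c·s^{−3/2}·t^{−3/2}`. -/
theorem integral_estimate_small_r :
    ∃ c > (0:ℝ), ∀ s t : ℝ, Real.exp 1 ≤ s → s ≤ t → t ≤ 2 * s →
      ∫ r in (1:ℝ)..(s / 2),
          Real.exp (-(Real.log t / (2 * t)) * r) * r ^ (-(3:ℝ)/2)
            * (s - r) ^ (-(3:ℝ)/2) * (t - r) ^ (-(3:ℝ)/2)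
        ≤ c * s ^ (-(3:ℝ)/2) * t ^ (-(3:ℝ)/2) := by
  refine ⟨16, by norm_num, ?_⟩
  intro s t hes hst h2s
  have he : (2:ℝ) < Real.exp 1 := by
    have := Real.exp_one_gt_d9
    linarith
  have hs2 : (2:ℝ) < s := lt_of_lt_of_le he hes
  have hs0 : (0:ℝ) < s := by linarith
  have ht0 : (0:ℝ) < t := by linarith
  have hab : (1:ℝ) ≤ s / 2 := by linarith
  have hlogt : 0 ≤ Real.log t := Real.log_nonneg (by linarith)
  set C : ℝ := (s/2) ^ (-(3:ℝ)/2) * (t/2) ^ (-(3:ℝ)/2) with hC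
  have hs2pos : (0:ℝ) < s / 2 := by linarith
  have ht2pos : (0:ℝ) < t / 2 := by linarith
  -- pointwise bound
  have hpt : ∀ r ∈ Set.Icc (1:ℝ) (s/2),
      Real.exp (-(Real.log t / (2 * t)) * r) * r ^ (-(3:ℝ)/2)
        * (s - r) ^ (-(3:ℝ)/2) * (t - r) ^ (-(3:ℝ)/2) ≤ C * r ^ (-(3:ℝ)/2) := by
    intro r hr
    obtain ⟨hr1, hr2⟩ := hr
    have hr0 : (0:ℝ) < r := by linarith
    have hsr : s / 2 ≤ s - r := by linarith
    have htr : t / 2 ≤ t - r := by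
      have : r ≤ t / 2 := le_trans hr2 (by linarith)
      linarith
    have hexp : Real.exp (-(Real.log t / (2 * t)) * r) ≤ 1 := by
      rw [Real.exp_le_one_iff]
      have : 0 ≤ Real.log t / (2 * t) * r := by positivity
      linarith
    have h1 : (s - r) ^ (-(3:ℝ)/2) ≤ (s/2) ^ (-(3:ℝ)/2) :=
      Real.rpow_le_rpow_of_nonpos hs2pos hsr (by norm_num)
    have h2 : (t - r) ^ (-(3:ℝ)/2) ≤ (t/2) ^ (-(3:ℝ)/2) :=
      Real.rpow_le_rpow_of_nonpos ht2pos htr (by norm_num)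
    have hr32 : (0:ℝ) ≤ r ^ (-(3:ℝ)/2) := Real.rpow_nonneg hr0.le _
    calc Real.exp (-(Real.log t / (2 * t)) * r) * r ^ (-(3:ℝ)/2)
        * (s - r) ^ (-(3:ℝ)/2) * (t - r) ^ (-(3:ℝ)/2)
        ≤ 1 * r ^ (-(3:ℝ)/2) * (s/2) ^ (-(3:ℝ)/2) * (t/2) ^ (-(3:ℝ)/2) := by
          have hsr0 : (0:ℝ) < s - r := by linarith
          have htr0 : (0:ℝ) < t - r := by linarith
          apply mul_le_mul
          · apply mul_le_mul
            · exact mul_le_mul_of_nonneg_right hexp hr32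
            · exact h1
            · exact Real.rpow_nonneg hsr0.le _
            · positivity
          · exact h2
          · exact Real.rpow_nonneg htr0.le _
          · positivity
      _ = C * r ^ (-(3:ℝ)/2) := by rw [hC]; ring
  -- integrability
  have hcontpow : ContinuousOn (fun r : ℝ => r ^ (-(3:ℝ)/2)) (Set.uIcc 1 (s/2)) := by
    apply ContinuousOn.rpow_const continuousOn_id
    intro x hx
    rw [Set.uIcc_of_le hab] at hx
    left; simp only [id_eq]; intro h; linarith [hx.1]
  have hintf : IntervalIntegrable (fun r : ℝ =>
      Real.exp (-(Real.log t / (2 * t)) * r) * r ^ (-(3:ℝ)/2)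
        * (s - r) ^ (-(3:ℝ)/2) * (t - r) ^ (-(3:ℝ)/2)) MeasureTheory.volume 1 (s/2) := by
    apply ContinuousOn.intervalIntegrable
    apply ContinuousOn.mul
    apply ContinuousOn.mul
    apply ContinuousOn.mul
    · exact (Real.continuous_exp.comp (continuous_const.mul continuous_id)).continuousOn
    · exact hcontpow
    · apply ContinuousOn.rpow_const (continuousOn_const.sub continuousOn_id)
      intro x hx
      rw [Set.uIcc_of_le hab] at hx
      left; simp only [Pi.sub_apply, id_eq]; intro h; nlinarith [hx.2]
    · apply ContinuousOn.rpow_const (continuousOn_const.sub continuousOn_id)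
      intro x hx
      rw [Set.uIcc_of_le hab] at hx
      left; simp only [Pi.sub_apply, id_eq]; intro h; nlinarith [hx.2]
  have hintg : IntervalIntegrable (fun r : ℝ => C * r ^ (-(3:ℝ)/2))
      MeasureTheory.volume 1 (s/2) :=
    (continuousOn_const.mul hcontpow).intervalIntegrable
  have hmono := intervalIntegral.integral_mono_on hab hintf hintg hpt
  -- compute the majorant integral
  have hval : ∫ r in (1:ℝ)..(s/2), C * r ^ (-(3:ℝ)/2) ≤ C * 2 := by
    rw [intervalIntegral.integral_const_mul]
    have hC0 : 0 ≤ C := by positivity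
    apply mul_le_mul_of_nonneg_left _ hC0
    rw [integral_rpow (Or.inr ⟨by norm_num, by
      rw [Set.uIcc_of_le hab]; intro h; exact absurd h.1 (by norm_num)⟩)]
    have : ((s/2):ℝ) ^ ((-(3:ℝ)/2) + 1) ≥ 0 := Real.rpow_nonneg hs2pos.le _
    have h1 : (1:ℝ) ^ ((-(3:ℝ)/2) + 1) = 1 := Real.one_rpow _
    rw [h1]
    rw [div_le_iff_of_neg (by norm_num : ((-(3:ℝ)/2) + 1) < 0)]
    nlinarith
  -- final algebra
  have hCval : C * 2 ≤ 16 * s ^ (-(3:ℝ)/2) * t ^ (-(3:ℝ)/2) := by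
    rw [hC, Real.div_rpow hs0.le (by norm_num : (0:ℝ) ≤ 2),
        Real.div_rpow ht0.le (by norm_num : (0:ℝ) ≤ 2)]
    have h2pow : (2:ℝ) ^ (-(3:ℝ)/2) * (2:ℝ) ^ (-(3:ℝ)/2) = 8⁻¹ := by
      rw [← Real.rpow_add (by norm_num),
        show (-(3:ℝ)/2 + -(3:ℝ)/2) = ((-3:ℤ):ℝ) by norm_num, Real.rpow_intCast]
      norm_num
    have hsp : 0 ≤ s ^ (-(3:ℝ)/2) := Real.rpow_nonneg hs0.le _
    have htp : 0 ≤ t ^ (-(3:ℝ)/2) := Real.rpow_nonneg ht0.le _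
    calc s ^ (-(3:ℝ)/2) / 2 ^ (-(3:ℝ)/2) * (t ^ (-(3:ℝ)/2) / 2 ^ (-(3:ℝ)/2)) * 2
        = s ^ (-(3:ℝ)/2) * t ^ (-(3:ℝ)/2) * (2 ^ (-(3:ℝ)/2) * 2 ^ (-(3:ℝ)/2))⁻¹ * 2 := by
          field_simp
      _ = s ^ (-(3:ℝ)/2) * t ^ (-(3:ℝ)/2) * 16 := by rw [h2pow]; ring
      _ ≤ 16 * s ^ (-(3:ℝ)/2) * t ^ (-(3:ℝ)/2) := by ring_nf; rfl
  calc _ ≤ ∫ r in (1:ℝ)..(s/2), C * r ^ (-(3:ℝ)/2) := hmono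
    _ ≤ C * 2 := hval
    _ ≤ 16 * s ^ (-(3:ℝ)/2) * t ^ (-(3:ℝ)/2) := hCval
end

section
/- There exists a constant c > 0 such that for all real s, t with t ≥ 16 and e ≤ s ≤ t ≤ 2s, ∫_{s/2}^{s − s·t^{−1/4}} e^{−(log t/(2t))·r} · r^{−3/2} · (s−r)^{−3/2} · (t−r)^{−3/2} dr ≤ c·t^{−5/2}·e^{−(log t/(2t))·s}. -/
open Real

/-- Intermediate-`r` case in the proof of Lemma 2.3 of the paper: there is `c > 0` such
that for `t ≥ 16` and `e ≤ s ≤ t ≤ 2s`,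
`∫_{s/2}^{s−s·t^{−1/4}} e^{−(log t/2t)r} r^{−3/2}(s−r)^{−3/2}(t−r)^{−3/2} dr
  ≤ c·t^{−5/2}·e^{−(log t/2t)s}`. -/
theorem integral_estimate_intermediate_r :
    ∃ c > (0:ℝ), ∀ s t : ℝ, 16 ≤ t → Real.exp 1 ≤ s → s ≤ t → t ≤ 2 * s →
      ∫ r in (s / 2)..(s - s * t ^ (-(1:ℝ)/4)),
          Real.exp (-(Real.log t / (2 * t)) * r) * r ^ (-(3:ℝ)/2)
            * (s - r) ^ (-(3:ℝ)/2) * (t - r) ^ (-(3:ℝ)/2)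
        ≤ c * t ^ (-(5:ℝ)/2) * Real.exp (-(Real.log t / (2 * t)) * s) := by
  refine ⟨16, by norm_num, ?_⟩
  intro s t ht16 hes hst hts
  have ht0 : (0:ℝ) < t := by linarith
  have hs0 : (0:ℝ) < s := lt_of_lt_of_le (exp_pos 1) hes
  have hlogt : 0 ≤ Real.log t := Real.log_nonneg (by linarith)
  set lam := Real.log t / (2 * t) with hlam
  have hlam0 : 0 ≤ lam := div_nonneg hlogt (by linarith)
  -- t^{-1/4} ≤ 1/2
  have h2le : (2:ℝ) ≤ t ^ ((1:ℝ)/4) := by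
    have h16 : (16:ℝ) ^ ((1:ℝ)/4) = 2 := by
      rw [show (16:ℝ) = 2 ^ (4:ℕ) by norm_num, ← Real.rpow_natCast 2 4,
        ← Real.rpow_mul (by norm_num)]
      norm_num
    calc (2:ℝ) = (16:ℝ) ^ ((1:ℝ)/4) := h16.symm
      _ ≤ t ^ ((1:ℝ)/4) := Real.rpow_le_rpow (by norm_num) ht16 (by norm_num)
  have htq : t ^ (-(1:ℝ)/4) ≤ 1/2 := by
    rw [show -(1:ℝ)/4 = -((1:ℝ)/4) by ring, Real.rpow_neg ht0.le]
    rw [inv_le_comm₀ (by positivity) (by norm_num)]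
    linarith
  set u := s * t ^ (-(1:ℝ)/4) with hu
  have hup : (0:ℝ) < u := mul_pos hs0 (Real.rpow_pos_of_pos ht0 _)
  have hab : s / 2 ≤ s - u := by
    have : u ≤ s * (1/2) := mul_le_mul_of_nonneg_left htq hs0.le
    linarith
  set M := Real.exp (-lam * s) * t ^ ((1:ℝ)/4) * (s/2) ^ (-(3:ℝ)/2)
      * (u ^ (-(3:ℝ)/2) * u ^ (-(3:ℝ)/2)) with hM
  -- pointwise bound
  have hpt : ∀ r ∈ Set.Icc (s/2) (s - u),
      Real.exp (-lam * r) * r ^ (-(3:ℝ)/2) * (s - r) ^ (-(3:ℝ)/2) * (t - r) ^ (-(3:ℝ)/2)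
        ≤ M := by
    rintro r ⟨hr1, hr2⟩
    have hr0 : (0:ℝ) < r := lt_of_lt_of_le (by positivity) hr1
    have hsr : u ≤ s - r := by linarith
    have htr : u ≤ t - r := by linarith
    have h1 : Real.exp (-lam * r) ≤ Real.exp (-lam * s) * t ^ ((1:ℝ)/4) := by
      have e1 : Real.exp (-lam * r) = Real.exp (-lam * s) * Real.exp (lam * (s - r)) := by
        rw [← Real.exp_add]; ring_nf
      rw [e1]
      have e2 : lam * (s - r) ≤ Real.log t * ((1:ℝ)/4) := by
        have h3 : lam * (s - r) ≤ lam * (s/2) := by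
          apply mul_le_mul_of_nonneg_left _ hlam0; linarith
        have h4 : lam * (s/2) ≤ Real.log t * ((1:ℝ)/4) := by
          rw [hlam]
          rw [div_mul_eq_mul_div, div_le_iff₀ (by linarith)]
          have := mul_le_mul_of_nonneg_left hst hlogt
          nlinarith
        linarith
      have e3 : Real.exp (lam * (s - r)) ≤ t ^ ((1:ℝ)/4) := by
        rw [Real.rpow_def_of_pos ht0]
        exact Real.exp_le_exp.mpr e2
      exact mul_le_mul_of_nonneg_left e3 (Real.exp_pos _).le
    have h2 : r ^ (-(3:ℝ)/2) ≤ (s/2) ^ (-(3:ℝ)/2) :=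
      Real.rpow_le_rpow_of_nonpos (by positivity) hr1 (by norm_num)
    have h3 : (s - r) ^ (-(3:ℝ)/2) ≤ u ^ (-(3:ℝ)/2) :=
      Real.rpow_le_rpow_of_nonpos hup hsr (by norm_num)
    have h4 : (t - r) ^ (-(3:ℝ)/2) ≤ u ^ (-(3:ℝ)/2) :=
      Real.rpow_le_rpow_of_nonpos hup htr (by norm_num)
    have p1 : (0:ℝ) ≤ r ^ (-(3:ℝ)/2) := (Real.rpow_pos_of_pos hr0 _).le
    have p2 : (0:ℝ) ≤ (s - r) ^ (-(3:ℝ)/2) := (Real.rpow_pos_of_pos (by linarith) _).le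
    have p3 : (0:ℝ) ≤ (t - r) ^ (-(3:ℝ)/2) := (Real.rpow_pos_of_pos (by linarith) _).le
    have q1 : (0:ℝ) ≤ Real.exp (-lam * s) * t ^ ((1:ℝ)/4) := by positivity
    have q2 : (0:ℝ) ≤ Real.exp (-lam * s) * t ^ ((1:ℝ)/4) * (s/2) ^ (-(3:ℝ)/2) := by positivity
    have q3 : (0:ℝ) ≤ Real.exp (-lam * s) * t ^ ((1:ℝ)/4) * (s/2) ^ (-(3:ℝ)/2)
        * u ^ (-(3:ℝ)/2) := by positivity
    calc Real.exp (-lam * r) * r ^ (-(3:ℝ)/2) * (s - r) ^ (-(3:ℝ)/2) * (t - r) ^ (-(3:ℝ)/2)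
        ≤ (Real.exp (-lam * s) * t ^ ((1:ℝ)/4)) * (s/2) ^ (-(3:ℝ)/2)
            * u ^ (-(3:ℝ)/2) * u ^ (-(3:ℝ)/2) := by
          exact mul_le_mul (mul_le_mul (mul_le_mul h1 h2 p1 q1) h3 p2 q2) h4 p3 q3
      _ = M := by rw [hM]; ring
  -- integrability
  have hcont : ContinuousOn (fun r : ℝ =>
      Real.exp (-lam * r) * r ^ (-(3:ℝ)/2) * (s - r) ^ (-(3:ℝ)/2) * (t - r) ^ (-(3:ℝ)/2))
      (Set.uIcc (s/2) (s - u)) := by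
    rw [Set.uIcc_of_le hab]
    have c1 : ContinuousOn (fun r : ℝ => Real.exp (-lam * r)) (Set.Icc (s/2) (s - u)) :=
      (Real.continuous_exp.comp (continuous_const.mul continuous_id)).continuousOn
    have c2 : ContinuousOn (fun r : ℝ => r ^ (-(3:ℝ)/2)) (Set.Icc (s/2) (s - u)) := by
      apply ContinuousOn.rpow_const (continuous_id'.continuousOn)
      rintro x ⟨hx1, _⟩
      exact Or.inl (show x ≠ 0 from ne_of_gt (lt_of_lt_of_le (half_pos hs0) hx1))
    have c3 : ContinuousOn (fun r : ℝ => (s - r) ^ (-(3:ℝ)/2)) (Set.Icc (s/2) (s - u)) := by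
      apply ContinuousOn.rpow_const ((continuous_const.sub continuous_id').continuousOn)
      rintro x ⟨_, hx2⟩
      exact Or.inl (show s - x ≠ 0 from ne_of_gt (by linarith [hup]))
    have c4 : ContinuousOn (fun r : ℝ => (t - r) ^ (-(3:ℝ)/2)) (Set.Icc (s/2) (s - u)) := by
      apply ContinuousOn.rpow_const ((continuous_const.sub continuous_id').continuousOn)
      rintro x ⟨_, hx2⟩
      exact Or.inl (show t - x ≠ 0 from ne_of_gt (by linarith [hup]))
    exact ((c1.mul c2).mul c3).mul c4
  have hInt : IntervalIntegrable (fun r : ℝ =>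
      Real.exp (-lam * r) * r ^ (-(3:ℝ)/2) * (s - r) ^ (-(3:ℝ)/2) * (t - r) ^ (-(3:ℝ)/2))
      MeasureTheory.volume (s/2) (s - u) := hcont.intervalIntegrable
  -- main chain
  have step1 : (∫ r in (s/2)..(s - u),
      Real.exp (-lam * r) * r ^ (-(3:ℝ)/2) * (s - r) ^ (-(3:ℝ)/2) * (t - r) ^ (-(3:ℝ)/2))
      ≤ (s - u - s/2) * M := by
    calc (∫ r in (s/2)..(s - u),
        Real.exp (-lam * r) * r ^ (-(3:ℝ)/2) * (s - r) ^ (-(3:ℝ)/2) * (t - r) ^ (-(3:ℝ)/2))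
        ≤ ∫ _r in (s/2)..(s - u), M :=
          intervalIntegral.integral_mono_on hab hInt intervalIntegrable_const hpt
      _ = (s - u - s/2) * M := by rw [intervalIntegral.integral_const, smul_eq_mul]
  have hM0 : 0 ≤ M := by
    rw [hM]; positivity
  have step2 : (s - u - s/2) * M ≤ (s/2) * M := by
    apply mul_le_mul_of_nonneg_right _ hM0
    linarith [hup]
  -- algebra: (s/2) * M ≤ 16 * t^{-5/2} * exp(-lam s)
  have key : (s/2) * M ≤ 16 * t ^ (-(5:ℝ)/2) * Real.exp (-lam * s) := by
    have hu3 : u ^ (-(3:ℝ)/2) * u ^ (-(3:ℝ)/2) = s ^ (-(3:ℝ)) * t ^ ((3:ℝ)/4) := by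
      rw [← Real.rpow_add hup]
      rw [hu, Real.mul_rpow hs0.le (Real.rpow_pos_of_pos ht0 _).le,
        ← Real.rpow_mul ht0.le]
      norm_num
    have hsp : (s/2) * (s/2) ^ (-(3:ℝ)/2) = (s/2) ^ (-(1:ℝ)/2) := by
      nth_rewrite 1 [← Real.rpow_one (s/2)]
      rw [← Real.rpow_add (by positivity)]
      norm_num
    have b1 : (s/2) ^ (-(1:ℝ)/2) ≤ 2 * t ^ (-(1:ℝ)/2) := by
      have h' : (s/2) ^ (-(1:ℝ)/2) ≤ (t/4) ^ (-(1:ℝ)/2) :=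
        Real.rpow_le_rpow_of_nonpos (by positivity) (by linarith) (by norm_num)
      have e4 : (t/4 : ℝ) ^ (-(1:ℝ)/2) = 2 * t ^ (-(1:ℝ)/2) := by
        rw [Real.div_rpow ht0.le (by norm_num)]
        rw [show ((4:ℝ) ^ (-(1:ℝ)/2)) = 1/2 by
          rw [show (-(1:ℝ)/2) = -((1:ℝ)/2) by ring, Real.rpow_neg (by norm_num : (0:ℝ) ≤ 4),
            ← Real.sqrt_eq_rpow, show (4:ℝ) = 2 ^ 2 by norm_num, Real.sqrt_sq (by norm_num)]
          norm_num]
        ring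
      linarith
    have b2 : s ^ (-(3:ℝ)) ≤ 8 * t ^ (-(3:ℝ)) := by
      have h' : s ^ (-(3:ℝ)) ≤ (t/2) ^ (-(3:ℝ)) :=
        Real.rpow_le_rpow_of_nonpos (by positivity) (by linarith) (by norm_num)
      have e4 : (t/2 : ℝ) ^ (-(3:ℝ)) = 8 * t ^ (-(3:ℝ)) := by
        rw [Real.div_rpow ht0.le (by norm_num)]
        rw [show ((2:ℝ) ^ (-(3:ℝ))) = 1/8 by
          rw [show (-(3:ℝ)) = ((-3:ℤ):ℝ) by norm_num, Real.rpow_intCast]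
          norm_num]
        ring
      linarith
    have e5 : t ^ ((1:ℝ)/4) * (2 * t ^ (-(1:ℝ)/2)) * (8 * t ^ (-(3:ℝ)) * t ^ ((3:ℝ)/4))
        = 16 * t ^ (-(5:ℝ)/2) := by
      rw [show t ^ ((1:ℝ)/4) * (2 * t ^ (-(1:ℝ)/2)) * (8 * t ^ (-(3:ℝ)) * t ^ ((3:ℝ)/4))
        = 16 * (t ^ ((1:ℝ)/4) * t ^ (-(1:ℝ)/2) * t ^ (-(3:ℝ)) * t ^ ((3:ℝ)/4)) by ring]
      rw [← Real.rpow_add ht0, ← Real.rpow_add ht0, ← Real.rpow_add ht0]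
      norm_num
    have expand : (s/2) * M
        = Real.exp (-lam * s) * (t ^ ((1:ℝ)/4) * ((s/2) * (s/2) ^ (-(3:ℝ)/2))
          * (u ^ (-(3:ℝ)/2) * u ^ (-(3:ℝ)/2))) := by
      rw [hM]; ring
    rw [expand, hsp, hu3]
    have final : t ^ ((1:ℝ)/4) * (s/2) ^ (-(1:ℝ)/2) * (s ^ (-(3:ℝ)) * t ^ ((3:ℝ)/4))
        ≤ 16 * t ^ (-(5:ℝ)/2) := by
      calc t ^ ((1:ℝ)/4) * (s/2) ^ (-(1:ℝ)/2) * (s ^ (-(3:ℝ)) * t ^ ((3:ℝ)/4))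
          ≤ t ^ ((1:ℝ)/4) * (2 * t ^ (-(1:ℝ)/2)) * (8 * t ^ (-(3:ℝ)) * t ^ ((3:ℝ)/4)) := by
            apply mul_le_mul
            · exact mul_le_mul_of_nonneg_left b1 (Real.rpow_pos_of_pos ht0 _).le
            · apply mul_le_mul_of_nonneg_right b2 (Real.rpow_pos_of_pos ht0 _).le
            · positivity
            · positivity
        _ = 16 * t ^ (-(5:ℝ)/2) := e5
    calc Real.exp (-lam * s) * (t ^ ((1:ℝ)/4) * (s/2) ^ (-(1:ℝ)/2)
          * (s ^ (-(3:ℝ)) * t ^ ((3:ℝ)/4)))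
        ≤ Real.exp (-lam * s) * (16 * t ^ (-(5:ℝ)/2)) :=
          mul_le_mul_of_nonneg_left final (Real.exp_pos _).le
      _ = 16 * t ^ (-(5:ℝ)/2) * Real.exp (-lam * s) := by ring
  calc (∫ r in (s/2)..(s - u),
      Real.exp (-lam * r) * r ^ (-(3:ℝ)/2) * (s - r) ^ (-(3:ℝ)/2) * (t - r) ^ (-(3:ℝ)/2))
      ≤ (s - u - s/2) * M := step1
    _ ≤ (s/2) * M := step2
    _ ≤ 16 * t ^ (-(5:ℝ)/2) * Real.exp (-lam * s) := key
end
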